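/- arXiv:2605.25080 — 5 statements merged into one kernel-verified Lean document; each statement's English description precedes it below -/
import Mathlib

section
/- The orbit of (0,0) under the group of affine transformations of ℤ² generated by α(x,y) = (x+2y, y+1) and β(x,y) = (x+1, 2x+y) contains every point P_n = (n, 1-n) for all n ∈ ℤ. -/
/-- The invertible affine map `α(x,y) = (x+2y, y+1)` of `ℤ²`. -/
def alphaPerm : Equiv.Perm (ℤ × ℤ) where
  toFun p := (p.1 + 2 * p.2, p.2 + 1)
  invFun p := (p.1 - 2 * (p.2 - 1), p.2 - 1)
  left_inv := fun ⟨x, y⟩ => by simp only [Prod.mk.injEq]; constructor <;> ring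
  right_inv := fun ⟨x, y⟩ => by simp only [Prod.mk.injEq]; constructor <;> ring

/-- The invertible affine map `β(x,y) = (x+1, 2x+y)` of `ℤ²`. -/
def betaPerm : Equiv.Perm (ℤ × ℤ) where
  toFun p := (p.1 + 1, 2 * p.1 + p.2)
  invFun p := (p.1 - 1, p.2 - 2 * (p.1 - 1))
  left_inv := fun ⟨x, y⟩ => by simp only [Prod.mk.injEq]; constructor <;> ring
  right_inv := fun ⟨x, y⟩ => by simp only [Prod.mk.injEq]; constructor <;> ring

lemma alpha_apply (x y : ℤ) : alphaPerm (x, y) = (x + 2 * y, y + 1) := rfl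

lemma beta_apply (x y : ℤ) : betaPerm (x, y) = (x + 1, 2 * x + y) := rfl

lemma beta_inv_apply (x y : ℤ) : betaPerm⁻¹ (x, y) = (x - 1, y - 2 * (x - 1)) := rfl

lemma alpha_zpow (m : ℤ) : ∀ x y : ℤ,
    (alphaPerm ^ m) (x, y) = (x + 2 * m * y + m ^ 2 - m, y + m) := by
  induction m using Int.induction_on with
  | zero => intro x y; simp
  | succ k ih =>
    intro x y
    rw [zpow_add_one, Equiv.Perm.mul_apply, alpha_apply, ih]
    simp only [Prod.mk.injEq]; constructor <;> ring
  | pred k ih =>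
    intro x y
    rw [zpow_sub_one, Equiv.Perm.mul_apply]
    have : alphaPerm⁻¹ (x, y) = (x - 2 * (y - 1), y - 1) := rfl
    rw [this, ih]
    simp only [Prod.mk.injEq]; constructor <;> ring

lemma alpha_mem : alphaPerm ∈ Subgroup.closure ({alphaPerm, betaPerm} : Set (Equiv.Perm (ℤ × ℤ))) :=
  Subgroup.subset_closure (Or.inl rfl)

lemma beta_mem : betaPerm ∈ Subgroup.closure ({alphaPerm, betaPerm} : Set (Equiv.Perm (ℤ × ℤ))) :=
  Subgroup.subset_closure (Or.inr rfl)

/-- The orbit of `(0,0)` under the group of transformations of `ℤ²` generated by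
`α` and `β` contains every point `P_n = (n, 1-n)`, `n ∈ ℤ`. -/
theorem orbit_contains_line (n : ℤ) :
    ∃ g ∈ Subgroup.closure ({alphaPerm, betaPerm} : Set (Equiv.Perm (ℤ × ℤ))),
      g ((0, 0) : ℤ × ℤ) = (n, 1 - n) := by
  induction n using Int.induction_on with
  | zero => exact ⟨alphaPerm, alpha_mem, rfl⟩
  | succ k ih =>
    obtain ⟨g, hg, hge⟩ := ih
    refine ⟨alphaPerm ^ (-(2 * (k : ℤ) + 1)) * (betaPerm * g),
      mul_mem (zpow_mem alpha_mem _) (mul_mem beta_mem hg), ?_⟩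
    rw [Equiv.Perm.mul_apply, Equiv.Perm.mul_apply, hge, beta_apply, alpha_zpow]
    simp only [Prod.mk.injEq]; constructor <;> ring
  | pred k ih =>
    obtain ⟨g, hg, hge⟩ := ih
    refine ⟨betaPerm⁻¹ * (alphaPerm ^ (-(2 * (k : ℤ) + 1)) * g),
      mul_mem (inv_mem beta_mem) (mul_mem (zpow_mem alpha_mem _) hg), ?_⟩
    rw [Equiv.Perm.mul_apply, Equiv.Perm.mul_apply, hge, alpha_zpow, beta_inv_apply]
    simp only [Prod.mk.injEq]; constructor <;> ring
end

section
/- Let H = { [[w,0],[0,1]] : w ∈ F } and K = ⟨û, v̂⟩ ≤ SL(3,ℤ), where F = ⟨U,V⟩ with U = [[1,2],[0,1]], V = [[1,0],[2,1]], û is the 3×3 matrix with rows (1,2,0),(0,1,1),(0,0,1), and v̂ has rows (1,0,1),(2,1,0),(0,0,1). Then H ∩ K is isomorphic to the stabilizer of (0,0) in F under the affine action where U acts as (x,y) ↦ (x+2y, y+1) and V acts as (x,y) ↦ (x+1, 2x+y). -/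
abbrev SL3 := Matrix.SpecialLinearGroup (Fin 3) ℤ

/-- `u = [[U,0],[0,1]]` with `U = [[1,2],[0,1]]`. -/
def umat : SL3 := ⟨!![1, 2, 0; 0, 1, 0; 0, 0, 1], by decide⟩

/-- `v = [[V,0],[0,1]]` with `V = [[1,0],[2,1]]`. -/
def vmat : SL3 := ⟨!![1, 0, 0; 2, 1, 0; 0, 0, 1], by decide⟩

/-- The affine lift `û` of `U`. -/
def uhat : SL3 := ⟨!![1, 2, 0; 0, 1, 1; 0, 0, 1], by decide⟩

/-- The affine lift `v̂` of `V`. -/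
def vhat : SL3 := ⟨!![1, 0, 1; 2, 1, 0; 0, 0, 1], by decide⟩

/-- `H`, the image of `F = ⟨U,V⟩` in the upper-left block. -/
def Hsub : Subgroup SL3 := Subgroup.closure {umat, vmat}

/-- `K = ⟨û, v̂⟩`. -/
def Ksub : Subgroup SL3 := Subgroup.closure {uhat, vhat}

/-- The affine action of the free group `F = ⟨U,V⟩` on `ℤ²`: the generator
corresponding to `U` acts as `α` and the one corresponding to `V` acts as `β`. -/
def affAction : FreeGroup Bool →* Equiv.Perm (ℤ × ℤ) :=
  FreeGroup.lift (fun b : Bool => if b then alphaPerm else betaPerm)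

/-! ### Auxiliary material -/

open Pointwise

/-- The linear part `(x,y) ↦ (x+2y, y)` of `α`. -/
def alpha0 : Equiv.Perm (ℤ × ℤ) where
  toFun p := (p.1 + 2 * p.2, p.2)
  invFun p := (p.1 - 2 * p.2, p.2)
  left_inv := fun ⟨x, y⟩ => by simp only [Prod.mk.injEq]; exact ⟨by ring, trivial⟩
  right_inv := fun ⟨x, y⟩ => by simp only [Prod.mk.injEq]; exact ⟨by ring, trivial⟩

/-- The linear part `(x,y) ↦ (x, 2x+y)` of `β`. -/
def beta0 : Equiv.Perm (ℤ × ℤ) where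
  toFun p := (p.1, 2 * p.1 + p.2)
  invFun p := (p.1, p.2 - 2 * p.1)
  left_inv := fun ⟨x, y⟩ => by simp only [Prod.mk.injEq]; exact ⟨trivial, by ring⟩
  right_inv := fun ⟨x, y⟩ => by simp only [Prod.mk.injEq]; exact ⟨trivial, by ring⟩

/-- The linear action of `F` on `ℤ²`. -/
def linAct : FreeGroup Bool →* Equiv.Perm (ℤ × ℤ) :=
  FreeGroup.lift (fun b : Bool => if b then alpha0 else beta0)

/-- `w ↦ ŵ`. -/
def phiHom : FreeGroup Bool →* SL3 :=
  FreeGroup.lift (fun b : Bool => if b then uhat else vhat)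

/-- `w ↦ [[w,0],[0,1]]`. -/
def psiHom : FreeGroup Bool →* SL3 :=
  FreeGroup.lift (fun b : Bool => if b then umat else vmat)

/-- Affine coordinates of a point of `ℤ²`. -/
def jvec (p : ℤ × ℤ) : Fin 3 → ℤ := ![p.1, p.2, 1]

lemma jvec_inj : Function.Injective jvec := by
  intro p q h
  have h0 := congrFun h 0
  have h1 := congrFun h 1
  simp [jvec] at h0 h1
  exact Prod.ext h0 h1

theorem Equiv.Perm.apply_inv_self {α : Type*} (f : Equiv.Perm α) (x : α) : f (f⁻¹ x) = x :=
  Equiv.apply_symm_apply f x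

theorem Equiv.Perm.inv_apply_self {α : Type*} (f : Equiv.Perm α) (x : α) : f⁻¹ (f x) = x :=
  Equiv.symm_apply_apply f x

lemma sl3_inv_step {g : SL3} {σ : Equiv.Perm (ℤ × ℤ)} {f : (ℤ × ℤ) → Fin 3 → ℤ}
    (h : ∀ p, g.val.mulVec (f p) = f (σ p)) :
    ∀ p, (g⁻¹).val.mulVec (f p) = f (σ⁻¹ p) := by
  intro p
  have h1 : g.val.mulVec (f (σ⁻¹ p)) = f p := by rw [h, Equiv.Perm.apply_inv_self]
  have h2 : (g⁻¹).val * g.val = 1 := by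
    rw [← Matrix.SpecialLinearGroup.coe_mul, inv_mul_cancel,
      Matrix.SpecialLinearGroup.coe_one]
  calc (g⁻¹).val.mulVec (f p) = (g⁻¹).val.mulVec (g.val.mulVec (f (σ⁻¹ p))) := by rw [h1]
    _ = ((g⁻¹).val * g.val).mulVec (f (σ⁻¹ p)) := by rw [Matrix.mulVec_mulVec]
    _ = f (σ⁻¹ p) := by rw [h2, Matrix.one_mulVec]

lemma phiHom_mulVec (w : FreeGroup Bool) (p : ℤ × ℤ) :
    (phiHom w).val.mulVec (jvec p) = jvec (affAction w p) := by
  induction w using FreeGroup.induction_on generalizing p with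
  | C1 => simp [Matrix.SpecialLinearGroup.coe_one, Matrix.one_mulVec]
  | of b =>
      show (phiHom (FreeGroup.of b)).val.mulVec (jvec p) = jvec (affAction (FreeGroup.of b) p)
      have hφ : phiHom (FreeGroup.of b) = if b then uhat else vhat := FreeGroup.lift_apply_of
      have ha : affAction (FreeGroup.of b) = if b then alphaPerm else betaPerm :=
        FreeGroup.lift_apply_of
      rw [hφ, ha]
      cases b <;>
        · funext i
          fin_cases i <;>
            simp [uhat, vhat, alphaPerm, betaPerm, jvec, Matrix.mulVec, dotProduct,
              Fin.sum_univ_three] <;> ring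
  | inv_of b hb =>
      rw [map_inv, map_inv]
      exact sl3_inv_step (fun q => hb (p := q)) p
  | mul x y hx hy =>
      rw [map_mul, map_mul, Matrix.SpecialLinearGroup.coe_mul, ← Matrix.mulVec_mulVec,
        hy, hx, Equiv.Perm.mul_apply]

lemma psiHom_mulVec (w : FreeGroup Bool) (p : ℤ × ℤ) (t : ℤ) :
    (psiHom w).val.mulVec ![p.1, p.2, t] = ![(linAct w p).1, (linAct w p).2, t] := by
  induction w using FreeGroup.induction_on generalizing p with
  | C1 => simp [Matrix.SpecialLinearGroup.coe_one, Matrix.one_mulVec]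
  | of b =>
      show (psiHom (FreeGroup.of b)).val.mulVec ![p.1, p.2, t] =
        ![(linAct (FreeGroup.of b) p).1, (linAct (FreeGroup.of b) p).2, t]
      have hφ : psiHom (FreeGroup.of b) = if b then umat else vmat := FreeGroup.lift_apply_of
      have ha : linAct (FreeGroup.of b) = if b then alpha0 else beta0 :=
        FreeGroup.lift_apply_of
      rw [hφ, ha]
      cases b <;>
        · funext i
          fin_cases i <;>
            simp [umat, vmat, alpha0, beta0, Matrix.mulVec, dotProduct,
              Fin.sum_univ_three] <;> ring
  | inv_of b hb =>
      rw [map_inv, map_inv]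
      exact sl3_inv_step (g := psiHom (FreeGroup.of b)) (σ := linAct (FreeGroup.of b))
        (f := fun q => ![q.1, q.2, t]) (fun q => hb (p := q)) p
  | mul x y hx hy =>
      rw [map_mul, map_mul, Matrix.SpecialLinearGroup.coe_mul, ← Matrix.mulVec_mulVec,
        hy, hx, Equiv.Perm.mul_apply]

/-- The affine action and the linear action differ by a translation. -/
lemma aff_sub_lin (w : FreeGroup Bool) (p q : ℤ × ℤ) :
    affAction w p - affAction w q = linAct w (p - q) := by
  induction w using FreeGroup.induction_on generalizing p q with
  | C1 => simp
  | of b =>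
      show affAction (FreeGroup.of b) p - affAction (FreeGroup.of b) q =
        linAct (FreeGroup.of b) (p - q)
      have ha : affAction (FreeGroup.of b) = if b then alphaPerm else betaPerm :=
        FreeGroup.lift_apply_of
      have hl : linAct (FreeGroup.of b) = if b then alpha0 else beta0 :=
        FreeGroup.lift_apply_of
      rw [ha, hl]
      cases b <;>
        simp [alphaPerm, betaPerm, alpha0, beta0, Prod.ext_iff, Prod.sub_def] <;> ring_nf <;>
          constructor <;> ring
  | inv_of b hb =>
      show affAction ((FreeGroup.of b)⁻¹) p - affAction ((FreeGroup.of b)⁻¹) q =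
        linAct ((FreeGroup.of b)⁻¹) (p - q)
      rw [map_inv, map_inv]
      set σ := affAction (FreeGroup.of b)
      set τ := linAct (FreeGroup.of b)
      have h1 : σ (σ⁻¹ p) - σ (σ⁻¹ q) = τ (σ⁻¹ p - σ⁻¹ q) := hb _ _
      rw [Equiv.Perm.apply_inv_self, Equiv.Perm.apply_inv_self] at h1
      rw [h1, Equiv.Perm.inv_apply_self]
  | mul x y hx hy =>
      rw [map_mul, map_mul, Equiv.Perm.mul_apply, Equiv.Perm.mul_apply,
        Equiv.Perm.mul_apply, hx, hy]

lemma linAct_zero (w : FreeGroup Bool) : linAct w (0, 0) = (0, 0) := by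
  have h := aff_sub_lin w (0, 0) (0, 0)
  have h1 : affAction w (0, 0) - affAction w (0, 0) = ((0, 0) : ℤ × ℤ) := sub_self _
  have h2 : ((0, 0) : ℤ × ℤ) - (0, 0) = (0, 0) := sub_self _
  rw [h1, h2] at h
  exact h.symm

lemma alpha0_zpow (n : ℤ) (p : ℤ × ℤ) :
    (alpha0 ^ n) p = (p.1 + 2 * n * p.2, p.2) := by
  induction n using Int.induction_on generalizing p with
  | zero => simp
  | succ k ih =>
      have happ : ∀ q : ℤ × ℤ, alpha0 q = (q.1 + 2 * q.2, q.2) := fun q => rfl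
      rw [zpow_add_one, Equiv.Perm.mul_apply, ih, happ]
      simp only [Prod.mk.injEq]
      exact ⟨by ring, trivial⟩
  | pred k ih =>
      have hinv : ∀ q : ℤ × ℤ, alpha0⁻¹ q = (q.1 - 2 * q.2, q.2) := fun q => rfl
      rw [zpow_sub_one, Equiv.Perm.mul_apply, ih, hinv]
      simp only [Prod.mk.injEq]
      exact ⟨by ring, trivial⟩

lemma beta0_zpow (n : ℤ) (p : ℤ × ℤ) :
    (beta0 ^ n) p = (p.1, 2 * n * p.1 + p.2) := by
  induction n using Int.induction_on generalizing p with
  | zero => simp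
  | succ k ih =>
      have happ : ∀ q : ℤ × ℤ, beta0 q = (q.1, 2 * q.1 + q.2) := fun q => rfl
      rw [zpow_add_one, Equiv.Perm.mul_apply, ih, happ]
      simp only [Prod.mk.injEq]
      exact ⟨trivial, by ring⟩
  | pred k ih =>
      have hinv : ∀ q : ℤ × ℤ, beta0⁻¹ q = (q.1, q.2 - 2 * q.1) := fun q => rfl
      rw [zpow_sub_one, Equiv.Perm.mul_apply, ih, hinv]
      simp only [Prod.mk.injEq]
      exact ⟨trivial, by ring⟩

lemma pingpong_ineq {a b n : ℤ} (hn : n ≠ 0) (h : |a| < |b|) : |b| < |a + 2 * n * b| := by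
  have h1 : 1 ≤ |n| := Int.one_le_abs hn
  have h2 : |2 * n * b| = 2 * |n| * |b| := by
    rw [abs_mul, abs_mul]; simp [abs_of_nonneg]
  have h3 : |2 * n * b| - |a| ≤ |a + 2 * n * b| := by
    have h4 := abs_sub_abs_le_abs_sub (2 * n * b) (-a)
    rw [abs_neg, sub_neg_eq_add, add_comm] at h4
    exact h4
  have hb : 0 ≤ |b| := abs_nonneg b
  nlinarith

/-- The ping-pong homomorphisms from two copies of `FreeGroup Unit`. -/
def ppHom : ∀ _ : Bool, FreeGroup Unit →* Equiv.Perm (ℤ × ℤ) := fun b =>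
  FreeGroup.lift (fun _ => if b then alpha0 else beta0)

lemma linAct_injective : Function.Injective linAct := by
  classical
  set X : Bool → Set (ℤ × ℤ) := fun b =>
    if b then {p | |p.2| < |p.1|} else {p | |p.1| < |p.2|} with hX
  have hcard : 3 ≤ Cardinal.mk Bool ∨ ∃ i : Bool, 3 ≤ Cardinal.mk (FreeGroup Unit) := by
    right
    refine ⟨true, ?_⟩
    rw [Cardinal.mk_congr FreeGroup.freeGroupUnitEquivInt, Cardinal.mk_int]
    exact_mod_cast (Cardinal.nat_lt_aleph0 3).le
  have hXnonempty : ∀ i, (X i).Nonempty := by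
    intro i
    cases i
    · exact ⟨(0, 1), by simp [hX]⟩
    · exact ⟨(1, 0), by simp [hX]⟩
  have hXdisj : Pairwise (Function.onFun Disjoint X) := by
    have key : Disjoint {p : ℤ × ℤ | |p.2| < |p.1|} {p : ℤ × ℤ | |p.1| < |p.2|} := by
      rw [Set.disjoint_left]
      rintro ⟨x, y⟩ h1 h2
      simp only [Set.mem_setOf_eq] at h1 h2
      omega
    intro i j hij
    cases i <;> cases j
    · exact absurd rfl hij
    · simpa [hX, Function.onFun] using key.symm
    · simpa [hX, Function.onFun] using key
    · exact absurd rfl hij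
  have hpp : Pairwise fun i j => ∀ h : FreeGroup Unit, h ≠ 1 → ppHom i h • X j ⊆ X i := by
    intro i j hij h hne
    obtain ⟨n, hn⟩ : ∃ n : ℤ, h = FreeGroup.of () ^ n :=
      ⟨FreeGroup.freeGroupUnitEquivInt h,
        (FreeGroup.freeGroupUnitEquivInt.left_inv h).symm⟩
    have hn0 : n ≠ 0 := by
      rintro rfl
      simp at hn
      exact hne hn
    have hval : ppHom i h = (if i then alpha0 else beta0) ^ n := by
      rw [hn, map_zpow]
      congr 1
    intro q hq
    rw [Set.mem_smul_set] at hq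
    obtain ⟨p, hp, rfl⟩ := hq
    cases i <;> cases j <;> try exact absurd rfl hij
    · -- i = false (beta), j = true
      simp only [hX, if_true, if_false, Set.mem_setOf_eq] at hp ⊢
      rw [hval]
      simp only [if_neg Bool.false_ne_true, Bool.false_eq_true, if_false,
        Equiv.Perm.smul_def, beta0_zpow]
      simpa [add_comm] using pingpong_ineq hn0 hp
    · -- i = true (alpha), j = false
      simp only [hX, if_true, if_false, Set.mem_setOf_eq] at hp ⊢
      rw [hval]
      simp only [if_true, Equiv.Perm.smul_def, alpha0_zpow]
      simpa [add_comm] using pingpong_ineq hn0 hp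
  have hinj := Monoid.CoprodI.lift_injective_of_ping_pong ppHom hcard X hXnonempty hXdisj hpp
  have hcomp : linAct =
      (Monoid.CoprodI.lift ppHom).comp freeGroupEquivCoprodI.toMonoidHom := by
    apply FreeGroup.ext_hom
    intro b
    simp only [MonoidHom.comp_apply, MulEquiv.coe_toMonoidHom, linAct, FreeGroup.lift_apply_of]
    rw [freeGroupEquivCoprodI_apply, FreeGroup.lift_apply_of, Monoid.CoprodI.lift_of]
    simp [ppHom, FreeGroup.lift_apply_of]
  rw [hcomp]
  exact hinj.comp (MulEquiv.injective _)

lemma affAction_injective : Function.Injective affAction := by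
  rw [injective_iff_map_eq_one]
  intro w hw
  apply linAct_injective
  rw [map_one]
  apply Equiv.ext
  intro p
  have h := aff_sub_lin w p (0, 0)
  rw [hw] at h
  simp only [Equiv.Perm.coe_one, id_eq] at h
  have h2 : p - ((0, 0) : ℤ × ℤ) = p := sub_zero _
  rw [h2] at h
  exact h.symm

lemma phiHom_injective : Function.Injective phiHom := by
  rw [injective_iff_map_eq_one]
  intro w hw
  apply affAction_injective
  rw [map_one]
  apply Equiv.ext
  intro p
  have h := phiHom_mulVec w p
  rw [hw] at h
  rw [Matrix.SpecialLinearGroup.coe_one, Matrix.one_mulVec] at h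
  exact (jvec_inj h).symm

lemma Ksub_eq_range : Ksub = phiHom.range := by
  rw [Ksub, phiHom, FreeGroup.range_lift_eq_closure]
  congr 1
  ext x
  simp [Bool.exists_bool, or_comm]

lemma Hsub_eq_range : Hsub = psiHom.range := by
  rw [Hsub, psiHom, FreeGroup.range_lift_eq_closure]
  congr 1
  ext x
  simp [Bool.exists_bool, or_comm]

/-- If `w` stabilizes the origin, then `ŵ = [[w,0],[0,1]]`. -/
lemma phi_eq_psi_of_stab {w : FreeGroup Bool} (h0 : affAction w (0, 0) = (0, 0)) :
    phiHom w = psiHom w := by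
  have fact1 : ∀ p, affAction w p = linAct w p := by
    intro p
    have h := aff_sub_lin w p (0, 0)
    rw [h0] at h
    have ha : affAction w p - ((0, 0) : ℤ × ℤ) = affAction w p := sub_zero _
    have hb : p - ((0, 0) : ℤ × ℤ) = p := sub_zero _
    rw [ha, hb] at h
    exact h
  have key : ∀ k, (phiHom w).val.mulVec (Pi.single k 1) =
      (psiHom w).val.mulVec (Pi.single k 1) := by
    intro k
    have e0 : (Pi.single (0 : Fin 3) (1 : ℤ)) = jvec (1, 0) - jvec (0, 0) := by
      funext i; fin_cases i <;> simp [jvec, Pi.single_apply]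
    have e1 : (Pi.single (1 : Fin 3) (1 : ℤ)) = jvec (0, 1) - jvec (0, 0) := by
      funext i; fin_cases i <;> simp [jvec, Pi.single_apply]
    have e2 : (Pi.single (2 : Fin 3) (1 : ℤ)) = jvec (0, 0) := by
      funext i; fin_cases i <;> simp [jvec, Pi.single_apply]
    have hψ : ∀ p : ℤ × ℤ, (psiHom w).val.mulVec (jvec p) = jvec (linAct w p) := by
      intro p
      have := psiHom_mulVec w p 1
      simpa [jvec] using this
    have k0 : (phiHom w).val.mulVec (Pi.single (0 : Fin 3) 1) =
        (psiHom w).val.mulVec (Pi.single (0 : Fin 3) 1) := by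
      rw [e0, Matrix.mulVec_sub, Matrix.mulVec_sub, phiHom_mulVec, phiHom_mulVec, hψ, hψ, fact1, fact1]
    have k1 : (phiHom w).val.mulVec (Pi.single (1 : Fin 3) 1) =
        (psiHom w).val.mulVec (Pi.single (1 : Fin 3) 1) := by
      rw [e1, Matrix.mulVec_sub, Matrix.mulVec_sub, phiHom_mulVec, phiHom_mulVec, hψ, hψ, fact1, fact1]
    have k2 : (phiHom w).val.mulVec (Pi.single (2 : Fin 3) 1) =
        (psiHom w).val.mulVec (Pi.single (2 : Fin 3) 1) := by
      rw [e2, phiHom_mulVec, hψ, fact1]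
    fin_cases k
    · exact k0
    · exact k1
    · exact k2
  apply Subtype.ext
  apply Matrix.ext
  intro i k
  have h := congrFun (key k) i
  simp only [Matrix.mulVec_single_one, mul_one] at h
  exact h

/-- If `ŵ ∈ H`, then `w` stabilizes the origin. -/
lemma stab_of_phi_mem_H {w : FreeGroup Bool} (h : phiHom w ∈ Hsub) :
    affAction w (0, 0) = (0, 0) := by
  rw [Hsub_eq_range] at h
  obtain ⟨w', hw'⟩ := h
  have h1 : (phiHom w).val.mulVec (jvec (0, 0)) = jvec (affAction w (0, 0)) :=
    phiHom_mulVec w (0, 0)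
  have h2 : (psiHom w').val.mulVec (jvec (0, 0)) = jvec (0, 0) := by
    have h3 := psiHom_mulVec w' (0, 0) 1
    rw [linAct_zero] at h3
    exact h3
  rw [← hw'] at h1
  rw [h2] at h1
  exact jvec_inj h1.symm

/-- `H ∩ K` is isomorphic to the stabilizer of `(0,0)` in `F` under the affine action
where `U` acts as `α` and `V` acts as `β`. -/
theorem inter_iso_stabilizer :
    Nonempty ((↥(Hsub ⊓ Ksub)) ≃*
      ↥(Subgroup.comap affAction
          (MulAction.stabilizer (Equiv.Perm (ℤ × ℤ)) ((0, 0) : ℤ × ℤ)))) := by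
  set S : Subgroup (FreeGroup Bool) :=
    Subgroup.comap affAction
      (MulAction.stabilizer (Equiv.Perm (ℤ × ℤ)) ((0, 0) : ℤ × ℤ)) with hS
  have memS : ∀ w : FreeGroup Bool, w ∈ S ↔ affAction w (0, 0) = (0, 0) := by
    intro w
    rw [hS, Subgroup.mem_comap, MulAction.mem_stabilizer_iff]
    rfl
  -- the homomorphism from the stabilizer to `H ⊓ K`
  have memHK : ∀ w : S, phiHom w.val ∈ Hsub ⊓ Ksub := by
    intro w
    constructor
    · rw [Hsub_eq_range, phi_eq_psi_of_stab ((memS w.val).mp w.2)]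
      exact ⟨w.val, rfl⟩
    · rw [Ksub_eq_range]
      exact ⟨w.val, rfl⟩
  let Φ : S →* ↥(Hsub ⊓ Ksub) :=
    (phiHom.comp S.subtype).codRestrict (Hsub ⊓ Ksub) memHK
  have hbij : Function.Bijective Φ := by
    constructor
    · intro a b hab
      have : phiHom a.val = phiHom b.val := congrArg Subtype.val hab
      exact Subtype.ext (phiHom_injective this)
    · rintro ⟨g, hgH, hgK⟩
      rw [Ksub_eq_range] at hgK
      obtain ⟨w, hw⟩ := hgK
      have hwS : w ∈ S := by
        rw [memS]
        exact stab_of_phi_mem_H (by rw [hw]; exact hgH)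
      exact ⟨⟨w, hwS⟩, Subtype.ext hw⟩
  exact ⟨(MulEquiv.ofBijective Φ hbij).symm⟩
end

section
/- A subgroup N of a finitely generated free group F(X) is finitely generated if and only if the core of its Schreier graph Γ(N\F, X) is finite, where the core is the subgraph spanned by all vertices and edges lying on reduced closed paths. -/
/-- An element of a free group is *cyclically reduced* if it has minimal word length
(`FreeGroup.norm`) in its conjugacy class. -/
def IsCyclicallyReduced {X : Type*} [DecidableEq X] (w : FreeGroup X) : Prop :=
  ∀ g : FreeGroup X, w.norm ≤ (g * w * g⁻¹).norm

namespace SchreierCore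

open FreeGroup List

variable {α : Type*} [DecidableEq α]
set_option linter.unusedSectionVars false

/-- inverse of a letter -/
def lInv (a : α × Bool) : α × Bool := (a.1, !a.2)

@[simp] lemma lInv_lInv (a : α × Bool) : lInv (lInv a) = a := by
  simp [lInv]

lemma lInv_eq_iff {a b : α × Bool} : lInv a = b ↔ a = lInv b := by
  constructor <;> rintro rfl <;> simp

@[simp] lemma invRev_singleton (a : α × Bool) : invRev [a] = [lInv a] := by
  simp [invRev, lInv]

lemma invRev_append' (L₁ L₂ : List (α × Bool)) :
    invRev (L₁ ++ L₂) = invRev L₂ ++ invRev L₁ := by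
  simp [invRev]

lemma invRev_concat (L : List (α × Bool)) (a : α × Bool) :
    invRev (L ++ [a]) = lInv a :: invRev L := by
  simp [invRev_append']

/-- A word is reduced iff no two adjacent letters cancel. -/
def Reduced (L : List (α × Bool)) : Prop := List.Chain' (fun a b => b ≠ lInv a) L

lemma Reduced.nil : Reduced ([] : List (α × Bool)) := List.isChain_nil

lemma Reduced.infix {L L' : List (α × Bool)} (h : Reduced L) (h' : L' <:+: L) :
    Reduced L' := List.IsChain.infix h h'

lemma reduce_eq_self_of_reduced {L : List (α × Bool)} (h : Reduced L) :
    reduce L = L := by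
  induction L with
  | nil => rfl
  | cons x L ih =>
    have hL : Reduced L := h.tail
    rw [reduce.cons, ih hL]
    cases L with
    | nil => rfl
    | cons y t =>
      have hxy : y ≠ lInv x := (List.isChain_cons_cons.mp h).1
      have : ¬(x.1 = y.1 ∧ x.2 = !y.2) := by
        rintro ⟨h1, h2⟩
        apply hxy
        simp [lInv, Prod.ext_iff, h1.symm, h2]
      simp [this]

lemma reduced_of_reduce_eq_self {L : List (α × Bool)} (h : reduce L = L) :
    Reduced L := by
  by_contra hL
  -- find an adjacent cancelling pair
  rw [Reduced] at hL
  -- use induction to find the bad pair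
  induction L with
  | nil => exact hL List.isChain_nil
  | cons x L ih =>
    cases L with
    | nil => exact hL (List.isChain_singleton x)
    | cons y t =>
      by_cases hxy : y = lInv x
      · -- step reduces length
        subst hxy
        have hstep : Red.Step (x :: lInv x :: t) t := by
          rcases x with ⟨a, b⟩
          exact Red.Step.cons_not (x := a) (b := b)
        have := FreeGroup.reduce.Step.eq hstep
        rw [h] at this
        have hlen := congrArg List.length this
        have hle := FreeGroup.Red.length_le (FreeGroup.reduce.red (L := t))
        simp at hlen
        omega
      · have h2 : reduce (y :: t) = y :: t := by
          have hred := FreeGroup.reduce.red (L := y :: t)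
          -- reduce (x :: y :: t) = x :: y :: t implies reduce (y::t) = y::t
          rw [reduce.cons] at h
          rcases hr : reduce (y :: t) with _ | ⟨z, s⟩
          · rw [hr] at h; simp at h
          · rw [hr] at h
            by_cases hc : x.1 = z.1 ∧ x.2 = !z.2
            · simp [hc] at h
              -- h : z :: s = ... length contradiction
              have := FreeGroup.Red.length_le (FreeGroup.reduce.red (L := y :: t))
              rw [hr] at this
              have hlen := congrArg List.length h
              simp at hlen this
              omega
            · simp [hc] at h
              rw [h.1, h.2]
        exact ih h2 (fun hc => hL (List.isChain_cons_cons.mpr ⟨hxy, hc⟩))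
lemma reduced_toWord (x : FreeGroup α) : Reduced (toWord x) :=
  reduced_of_reduce_eq_self (FreeGroup.reduce_toWord x)

lemma toWord_mk_reduced {L : List (α × Bool)} (h : Reduced L) :
    (mk L).toWord = L := by rw [toWord_mk, reduce_eq_self_of_reduced h]

lemma Reduced.append {L M : List (α × Bool)} (hL : Reduced L) (hM : Reduced M)
    (hjoin : ∀ x ∈ L.getLast?, ∀ y ∈ M.head?, y ≠ lInv x) :
    Reduced (L ++ M) :=
  List.isChain_append.mpr ⟨hL, hM, hjoin⟩

lemma Reduced.junction {L M : List (α × Bool)} (h : Reduced (L ++ M))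
    {x y} (hx : x ∈ L.getLast?) (hy : y ∈ M.head?) : y ≠ lInv x :=
  (List.isChain_append.mp h).2.2 x hx y hy

lemma Reduced.invRev {L : List (α × Bool)} (h : Reduced L) :
    Reduced (invRev L) := by
  rw [Reduced, FreeGroup.invRev, List.Chain', List.isChain_reverse]
  rw [List.isChain_map]
  refine h.imp ?_
  rintro ⟨p,q⟩ ⟨r,s⟩ hab hc
  apply hab
  cases q <;> cases s <;> simp_all [lInv]

lemma mk_cancel (L₁ L₂ : List (α × Bool)) (a : α × Bool) :
    mk (L₁ ++ a :: lInv a :: L₂) = mk (L₁ ++ L₂) := by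
  have : Red.Step (L₁ ++ a :: lInv a :: L₂) (L₁ ++ L₂) := by
    rcases a with ⟨x, b⟩
    have := Red.Step.not_rev (L₁ := L₁) (L₂ := L₂) (x := x) (b := !b)
    simpa [lInv] using this
  rw [← quot_mk_eq_mk, ← quot_mk_eq_mk]
  exact Quot.sound this

/-- structure of multiplication of free group elements: the reduced words cancel
maximally at the junction. -/
lemma toWord_mul_decomp (x y : FreeGroup α) :
    ∃ a b c, x.toWord = a ++ b ∧ y.toWord = invRev b ++ c ∧
      (x * y).toWord = a ++ c := by
  generalize hn : x.toWord.length = n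
  induction n using Nat.strong_induction_on generalizing x y with
  | _ n ih =>
  rcases List.eq_nil_or_concat x.toWord with hL | ⟨L', l, hL⟩
  on_goal 2 => rw [List.concat_eq_append] at hL
  · refine ⟨[], [], y.toWord, by simp [hL], by simp [invRev], ?_⟩
    have hx : x = 1 := toWord_eq_nil_iff.mp hL
    simp [hx]
  · rcases hM : y.toWord with _ | ⟨m, M'⟩
    · refine ⟨x.toWord, [], [], by simp, by simp [invRev], ?_⟩
      have hy : y = 1 := toWord_eq_nil_iff.mp hM
      simp [hy]
    · by_cases hc : m = lInv l
      · -- cancellation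
        have hLred : Reduced x.toWord := reduced_toWord x
        have hMred : Reduced y.toWord := reduced_toWord y
        have hL'red : Reduced L' := hLred.infix ⟨[], [l], by rw [hL]; simp⟩
        have hM'red : Reduced M' := hMred.infix ⟨[m], [], by rw [hM]; simp⟩
        set x' := mk L' with hx'
        set y' := mk M' with hy'
        have hx'w : x'.toWord = L' := toWord_mk_reduced hL'red
        have hy'w : y'.toWord = M' := toWord_mk_reduced hM'red
        have hxy : x * y = x' * y' := by
          have h1 : x = mk (L' ++ [l]) := by rw [← hL, mk_toWord]
          have h2 : y = mk (m :: M') := by rw [← hM, mk_toWord]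
          rw [h1, h2, mul_mk, mul_mk, hc]
          have := mk_cancel L' M' l
          simpa using this
        have hlen : L'.length < n := by
          rw [← hn, hL]; simp
        obtain ⟨a, b, c, h1, h2, h3⟩ := ih L'.length (by omega) x' y' (by rw [hx'w])
        rw [hx'w] at h1
        rw [hy'w] at h2
        refine ⟨a, b ++ [l], c, ?_, ?_, ?_⟩
        · rw [hL, h1]; simp
        · rw [h2, invRev_concat, ← hc]; simp
        · rw [hxy, h3]
      · -- no cancellation
        have hred : Reduced (x.toWord ++ y.toWord) := by
          refine (reduced_toWord x).append (reduced_toWord y) ?_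
          intro u hu v hv
          rw [hL] at hu
          rw [hM] at hv
          simp at hu hv
          subst hu hv
          exact hc
        refine ⟨x.toWord, [], m :: M', by simp, by simp [invRev], ?_⟩
        have h3 : (x * y).toWord = x.toWord ++ y.toWord := by
          calc (x * y).toWord = (mk (x.toWord ++ y.toWord)).toWord := by
                rw [← mul_mk, mk_toWord, mk_toWord]
            _ = x.toWord ++ y.toWord := toWord_mk_reduced hred
        rw [h3, hM]

lemma norm_def (x : FreeGroup α) : norm x = x.toWord.length := rfl

lemma reduced_flatten_replicate {W : List (α × Bool)} (hW : Reduced (W ++ W)) (k : ℕ) :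
    Reduced ((List.replicate k W).flatten) := by
  induction k with
  | zero => simp [Reduced]; exact List.isChain_nil
  | succ k ih =>
    rw [List.replicate_succ, List.flatten_cons]
    refine Reduced.append (hW.infix ⟨[], W, by simp⟩) ih ?_
    intro x hx y hy
    refine Reduced.junction hW (x := x) (y := y) hx ?_
    rcases k with _ | k
    · simp at hy
    · rw [List.replicate_succ, List.flatten_cons] at hy
      rcases W with _ | ⟨w₀, W'⟩
      · simp at hx
      · simpa using hy

lemma toWord_pow {w : FreeGroup α} (h : Reduced (w.toWord ++ w.toWord)) (k : ℕ) :
    (w ^ k).toWord = (List.replicate k w.toWord).flatten := by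
  conv_lhs => rw [← mk_toWord (x := w)]
  rw [pow_mk]
  exact toWord_mk_reduced (reduced_flatten_replicate h k)

lemma norm_pow_of_reduced_sq {w : FreeGroup α} (h : Reduced (w.toWord ++ w.toWord)) (k : ℕ) :
    norm (w ^ k) = k * norm w := by
  rw [norm_def, toWord_pow h, norm_def]
  simp [List.length_flatten, List.sum_replicate, smul_eq_mul, Function.comp]

lemma norm_pow_le (x : FreeGroup α) (k : ℕ) : norm (x ^ k) ≤ k * norm x := by
  induction k with
  | zero => simp
  | succ k ih =>
    rw [pow_succ]
    calc norm (x ^ k * x) ≤ norm (x ^ k) + norm x := norm_mul_le _ _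
      _ ≤ k * norm x + norm x := by omega
      _ = (k + 1) * norm x := by ring

private lemma nat_aux {B A C : ℕ} (h : ∀ m, m * B ≤ m * A + C) : B ≤ A := by
  by_contra hlt
  push_neg at hlt
  have h1 := h (C + 1)
  nlinarith

lemma isCyclicallyReduced_of_reduced_sq {w : FreeGroup α}
    (h : Reduced (w.toWord ++ w.toWord)) : IsCyclicallyReduced w := by
  intro g
  refine nat_aux (A := norm (g * w * g⁻¹)) (C := 2 * norm g) fun m => ?_
  have h1 : w ^ m = g⁻¹ * (g * w * g⁻¹) ^ m * g := by
    rw [conj_pow]; group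
  have h2 : norm (w ^ m) ≤ norm g + norm ((g * w * g⁻¹) ^ m) + norm g := by
    rw [h1]
    calc norm (g⁻¹ * (g * w * g⁻¹) ^ m * g)
        ≤ norm (g⁻¹ * (g * w * g⁻¹) ^ m) + norm g := norm_mul_le _ _
      _ ≤ norm g⁻¹ + norm ((g * w * g⁻¹) ^ m) + norm g := by
          have := norm_mul_le g⁻¹ ((g * w * g⁻¹) ^ m); omega
      _ = norm g + norm ((g * w * g⁻¹) ^ m) + norm g := by rw [norm_inv_eq]
  have h3 := norm_pow_le (g * w * g⁻¹) m
  have h4 := norm_pow_of_reduced_sq h m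
  omega

lemma IsCyclicallyReduced.reduced_sq {w : FreeGroup α} (h : IsCyclicallyReduced w) :
    Reduced (w.toWord ++ w.toWord) := by
  by_contra hred
  have hWred : Reduced w.toWord := reduced_toWord w
  have hjunc : ∃ x ∈ w.toWord.getLast?, ∃ y ∈ w.toWord.head?, y = lInv x := by
    by_contra hj
    push_neg at hj
    exact hred (hWred.append hWred (fun x hx y hy => hj x hx y hy))
  obtain ⟨x, hx, y, hy, hxy⟩ := hjunc
  obtain ⟨T, hT⟩ : ∃ T, w.toWord = y :: T := by
    rcases hW : w.toWord with _ | ⟨y', T⟩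
    · rw [hW] at hy; simp at hy
    · rw [hW] at hy; simp at hy; exact ⟨T, by rw [hy]⟩
  rcases List.eq_nil_or_concat T with rfl | ⟨M, x', hM⟩
  · -- w.toWord = [y], so x = y = lInv x, absurd
    rw [hT] at hx
    rcases x with ⟨a, b⟩
    rcases y with ⟨c, d⟩
    simp [Prod.ext_iff] at hx
    simp [lInv, Prod.ext_iff] at hxy
    simp_all
  · rw [List.concat_eq_append] at hM
    subst hM
    subst hxy
    have hx' : x' = x := by
      rw [hT] at hx
      rw [show lInv x :: (M ++ [x']) = (lInv x :: M) ++ [x'] from by simp,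
        List.getLast?_concat] at hx
      simpa using hx
    rw [hx'] at hT
    -- w.toWord = lInv x :: M ++ [x]
    set g := mk [x] with hg
    have hginv : g⁻¹ = mk [lInv x] := by
      rw [hg, inv_mk, invRev_singleton]
    have hconj : g * w * g⁻¹ = mk M := by
      conv_lhs => rw [← mk_toWord (x := w), hT]
      rw [hg, hginv, mul_mk, mul_mk]
      have e1 : [x] ++ lInv x :: (M ++ [x]) ++ [lInv x]
          = [] ++ x :: lInv x :: (M ++ [x] ++ [lInv x]) := by simp
      rw [e1, mk_cancel]
      have e2 : ([] ++ (M ++ [x] ++ [lInv x]) : List (α × Bool)) = M ++ x :: lInv x :: [] := by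
        simp
      rw [e2, mk_cancel]
      simp
    have hle := h g
    rw [hconj] at hle
    have h1 : norm (mk M) ≤ M.length := norm_mk_le
    have h2 : norm w = M.length + 2 := by
      rw [norm_def, hT]; simp
    omega

/-- Cyclic reduction: every nontrivial element is a conjugate `u * c * u⁻¹` of a
nontrivial cyclically reduced element, with norm control. -/
lemma cyc_decomp (n : FreeGroup α) (hn : n ≠ 1) :
    ∃ u c : FreeGroup α, n = u * c * u⁻¹ ∧ c ≠ 1 ∧ IsCyclicallyReduced c ∧
      2 * norm u + norm c ≤ norm n := by
  generalize hm : norm n = m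
  induction m using Nat.strong_induction_on generalizing n with
  | _ m ih =>
  by_cases hred : Reduced (n.toWord ++ n.toWord)
  · exact ⟨1, n, by group, hn, isCyclicallyReduced_of_reduced_sq hred, by simp [hm]⟩
  · -- junction fails as before
    have hWred : Reduced n.toWord := reduced_toWord n
    have hjunc : ∃ x ∈ n.toWord.getLast?, ∃ y ∈ n.toWord.head?, y = lInv x := by
      by_contra hj
      push_neg at hj
      exact hred (hWred.append hWred (fun x hx y hy => hj x hx y hy))
    obtain ⟨x, hx, y, hy, hxy⟩ := hjunc
    obtain ⟨T, hT⟩ : ∃ T, n.toWord = y :: T := by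
      rcases hW : n.toWord with _ | ⟨y', T⟩
      · rw [hW] at hy; simp at hy
      · rw [hW] at hy; simp at hy; exact ⟨T, by rw [hy]⟩
    rcases List.eq_nil_or_concat T with rfl | ⟨M, x', hM⟩
    · rw [hT] at hx
      rcases x with ⟨a, b⟩
      rcases y with ⟨c, d⟩
      simp [Prod.ext_iff] at hx
      simp [lInv, Prod.ext_iff] at hxy
      simp_all
    · rw [List.concat_eq_append] at hM
      subst hM
      subst hxy
      have hx' : x' = x := by
        rw [hT] at hx
        rw [show lInv x :: (M ++ [x']) = (lInv x :: M) ++ [x'] from by simp,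
          List.getLast?_concat] at hx
        simpa using hx
      rw [hx'] at hT
      -- n.toWord = lInv x :: M ++ [x]; conjugate inward
      have hMred : Reduced M := hWred.infix ⟨[lInv x], [x], by rw [hT]; simp⟩
      set n' := mk M with hn'
      have hn'w : n'.toWord = M := toWord_mk_reduced hMred
      have hMne : M ≠ [] := by
        rintro rfl
        -- n.toWord = [lInv x, x] not reduced
        rw [hT] at hWred
        simp [Reduced] at hWred
        exact (List.isChain_cons_cons.mp hWred).1 (by simp)
      have hn'1 : n' ≠ 1 := by
        intro h1
        rw [h1] at hn'w
        rw [toWord_one] at hn'w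
        exact hMne hn'w.symm
      have hnorm' : norm n' = M.length := by rw [norm_def, hn'w]
      have hnormn : norm n = M.length + 2 := by rw [norm_def, hT]; simp
      obtain ⟨u', c, hdec, hc1, hccr, hnle⟩ :=
        ih (norm n') (by omega) n' hn'1 rfl
      refine ⟨mk [lInv x] * u', c, ?_, hc1, hccr, ?_⟩
      · have hrecon : n = mk [lInv x] * n' * (mk [lInv x])⁻¹ := by
          rw [inv_mk, invRev_singleton, lInv_lInv, hn', mul_mk, mul_mk]
          conv_lhs => rw [← mk_toWord (x := n), hT]
          congr 1
        rw [hrecon, hdec]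
        group
      · have h1 : norm (mk [lInv x] * u') ≤ 1 + norm u' := by
          have := norm_mul_le (mk [lInv x]) u'
          have h2 : norm (mk [lInv x]) ≤ 1 := by
            have := norm_mk_le (L₁ := [lInv x]); simpa using this
          omega
        omega


lemma head_eq_of_cons_eq {a b : α × Bool} {L M : List (α × Bool)}
    (h : a :: L = b :: M) : a = b := by
  injection h

/-- One-sided analysis: either `g⁻¹` survives as a prefix of `g⁻¹ * w^k * g` for some `k`,
or the word of `g⁻¹` ends with the inverse of the first letter of `w`. -/
lemma prefix_or_junction (w g : FreeGroup α) (hw : w ≠ 1)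
    (hsq : Reduced (w.toWord ++ w.toWord)) :
    (∃ k : ℕ, (g⁻¹).toWord <+: (g⁻¹ * w ^ k * g).toWord) ∨
    (∃ l G₀, (g⁻¹).toWord = G₀ ++ [l] ∧ w.toWord.head? = some (lInv l)) := by
  set a := norm g with ha
  set k := 2 * a + 1 with hk
  have hWne : w.toWord ≠ [] := fun h => hw (toWord_eq_nil_iff.mp h)
  have hWlen : 1 ≤ w.toWord.length := List.length_pos_iff.mpr hWne
  obtain ⟨A, B, C, h1, h2, h3⟩ := toWord_mul_decomp (w ^ k) g
  have hpowlen : (w ^ k).toWord.length = k * w.toWord.length := by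
    have := norm_pow_of_reduced_sq hsq k
    rw [norm_def, norm_def] at this
    exact this
  have hBle : B.length ≤ a := by
    have := congrArg List.length h2
    simp [invRev_length] at this
    rw [ha, norm_def]
    omega
  have hAlen : a + 1 ≤ A.length := by
    have := congrArg List.length h1
    rw [hpowlen] at this
    simp at this
    have hkW : k ≤ k * w.toWord.length := Nat.le_mul_of_pos_right k hWlen
    omega
  have hAne : A ≠ [] := by
    intro h; rw [h] at hAlen; simp at hAlen
  obtain ⟨A', B', C', h1', h2', h3'⟩ := toWord_mul_decomp g⁻¹ (w ^ k * g)
  have hassoc : g⁻¹ * (w ^ k * g) = g⁻¹ * w ^ k * g := by group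
  rw [hassoc] at h3'
  rcases List.eq_nil_or_concat B' with rfl | ⟨B₀, l, hB'⟩
  · left
    refine ⟨k, ?_⟩
    rw [h3']
    rw [List.append_nil] at h1'
    rw [← h1']
    exact ⟨C', rfl⟩
  · right
    rw [List.concat_eq_append] at hB'
    subst hB'
    refine ⟨l, A' ++ B₀, by rw [h1', List.append_assoc], ?_⟩
    -- head of (w^k * g).toWord is lInv l, and also head of A, which is head of w.toWord
    have hhead1 : (w ^ k * g).toWord.head? = some (lInv l) := by
      rw [h2', invRev_concat]
      simp
    obtain ⟨a₀, A₁, rfl⟩ := List.exists_cons_of_ne_nil hAne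
    have hhead2 : (w ^ k * g).toWord.head? = some a₀ := by
      rw [h3]
      simp
    obtain ⟨w₀, W₁, hW⟩ := List.exists_cons_of_ne_nil hWne
    have hflat : (w ^ k).toWord = w.toWord ++ (List.replicate (2 * a) w.toWord).flatten := by
      rw [toWord_pow hsq, hk, List.replicate_succ, List.flatten_cons]
    have ha₀ : a₀ = w₀ := by
      have := h1.symm.trans hflat
      rw [hW] at this
      rw [List.cons_append] at this
      exact head_eq_of_cons_eq this
    rw [hW]
    simp only [List.head?_cons]
    rw [← ha₀]
    rw [hhead1] at hhead2
    injection hhead2 with h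
    rw [h]

lemma reduced_sq_inv {w : FreeGroup α} (hsq : Reduced (w.toWord ++ w.toWord)) :
    Reduced (w⁻¹.toWord ++ w⁻¹.toWord) := by
  rw [toWord_inv, ← invRev_append']
  exact hsq.invRev

/-- Part I: if some conjugate `g⁻¹ * w * g` with `w ≠ 1` cyclically reduced exists,
then `g⁻¹` is a prefix of some power `g⁻¹ * w^{±k} * g`. -/
lemma exists_prefix_of_fixes (w g : FreeGroup α) (hw : w ≠ 1)
    (hcr : IsCyclicallyReduced w) :
    ∃ k : ℕ, (g⁻¹).toWord <+: (g⁻¹ * w ^ k * g).toWord ∨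
             (g⁻¹).toWord <+: (g⁻¹ * w⁻¹ ^ k * g).toWord := by
  have hsq := IsCyclicallyReduced.reduced_sq hcr
  rcases prefix_or_junction w g hw hsq with ⟨k, hp⟩ | ⟨l, G₀, hG, hhead⟩
  · exact ⟨k, Or.inl hp⟩
  rcases prefix_or_junction w⁻¹ g (inv_ne_one.mpr hw) (reduced_sq_inv hsq)
      with ⟨k, hp⟩ | ⟨l₂, G₀₂, hG₂, hhead₂⟩
  · exact ⟨k, Or.inr hp⟩
  exfalso
  -- the two junction letters agree
  have hl : l₂ = l := by
    have h := hG.symm.trans hG₂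
    have h1 := congrArg List.getLast? h
    rw [List.getLast?_concat, List.getLast?_concat] at h1
    injection h1 with h1
    exact h1.symm
  rw [hl] at hhead₂
  have hWne : w.toWord ≠ [] := fun h => hw (toWord_eq_nil_iff.mp h)
  rcases List.eq_nil_or_concat w.toWord with hnil | ⟨M, z, hMz⟩
  · exact hWne hnil
  rw [List.concat_eq_append] at hMz
  have hinv : w⁻¹.toWord.head? = some (lInv z) := by
    rw [toWord_inv, hMz, invRev_concat]
    simp
  rw [hinv] at hhead₂
  injection hhead₂ with h2
  have hz : z = l := by
    have := congrArg lInv h2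
    simpa using this
  -- junction of Reduced (W ++ W) is violated
  have hxmem : l ∈ w.toWord.getLast? := by
    rw [hMz, List.getLast?_concat, hz]
    rfl
  have hymem : lInv l ∈ w.toWord.head? := by
    rw [hhead]
    rfl
  exact Reduced.junction hsq hxmem hymem rfl


/-- A step in the Cayley graph: right multiplication by a single letter. -/
def IsStep (g g' : FreeGroup α) : Prop := ∃ l : α × Bool, g' = g * mk [l]

/-- The "thickened subtree" `N · Y` where `Y` is the set of prefixes of generators. -/
def Vset (N : Subgroup (FreeGroup α)) (A : Set (FreeGroup α)) : Set (FreeGroup α) :=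
  { q | ∃ n ∈ N, ∃ L : List (α × Bool),
      (L = [] ∨ ∃ a ∈ A, (L <+: a.toWord ∨ L <+: (a⁻¹).toWord)) ∧ q = n * mk L }

lemma Vset_mul_left {N : Subgroup (FreeGroup α)} {A : Set (FreeGroup α)}
    {x q : FreeGroup α} (hx : x ∈ N) (hq : q ∈ Vset N A) : x * q ∈ Vset N A := by
  obtain ⟨n', hn', L, hL, rfl⟩ := hq
  exact ⟨x * n', mul_mem hx hn', L, hL, by rw [mul_assoc]⟩

lemma mk_letter_cancel (l : α × Bool) : mk [l] * mk [lInv l] = 1 := by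
  rw [mul_mk]
  have := mk_cancel [] [] l
  simpa [one_eq_mk] using this

lemma path_to {N : Subgroup (FreeGroup α)} {A : Set (FreeGroup α)}
    (hNA : Subgroup.closure A = N) {n : FreeGroup α} (hn : n ∈ N) :
    ∃ (r : ℕ) (f : ℕ → FreeGroup α), f 0 = 1 ∧ f r = n ∧
      (∀ i < r, IsStep (f i) (f (i + 1))) ∧ (∀ i ≤ r, f i ∈ Vset N A) := by
  rw [← hNA] at hn
  induction hn using Subgroup.closure_induction with
  | mem a ha =>
    refine ⟨a.toWord.length, fun i => mk (a.toWord.take i), by simp [← one_eq_mk], ?_, ?_, ?_⟩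
    · beta_reduce
      rw [List.take_length, mk_toWord]
    · intro i hi
      refine ⟨a.toWord[i]'hi, ?_⟩
      beta_reduce
      rw [mul_mk, ← List.concat_eq_append, List.take_concat_get]
    · intro i _
      exact ⟨1, one_mem N, a.toWord.take i,
        Or.inr ⟨a, ha, Or.inl (List.take_prefix _ _)⟩, by rw [one_mul]⟩
  | one =>
    exact ⟨0, fun _ => 1, rfl, rfl, by omega,
      fun i _ => ⟨1, one_mem N, [], Or.inl rfl, by rw [← one_eq_mk, mul_one]⟩⟩
  | mul x y hx hy ihx ihy =>
    obtain ⟨r₁, f₁, h10, h1r, h1s, h1v⟩ := ihx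
    obtain ⟨r₂, f₂, h20, h2r, h2s, h2v⟩ := ihy
    have hxN : x ∈ N := hNA ▸ hx
    refine ⟨r₁ + r₂, fun i => if i < r₁ then f₁ i else x * f₂ (i - r₁), ?_, ?_, ?_, ?_⟩
    · by_cases h : 0 < r₁
      · simp only [if_pos h]; exact h10
      · have hr0 : r₁ = 0 := by omega
        have hx1 : x = 1 := by rw [← h1r, hr0, h10]
        simp only [if_neg h, hx1, one_mul, hr0, Nat.sub_zero]
        exact h20
    · have hlt : ¬(r₁ + r₂ < r₁) := by omega
      simp only [if_neg hlt]
      rw [Nat.add_sub_cancel_left, h2r]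
    · intro i hi
      by_cases h1 : i + 1 < r₁
      · have h0 : i < r₁ := by omega
        simp only [if_pos h1, if_pos h0]
        exact h1s i h0
      · by_cases h0 : i < r₁
        · have hieq : i + 1 = r₁ := by omega
          simp only [if_pos h0, if_neg h1]
          have he : x * f₂ (i + 1 - r₁) = f₁ (i + 1) := by
            rw [hieq, Nat.sub_self, h20, mul_one, ← h1r]
          rw [he]
          exact h1s i h0
        · simp only [if_neg h0, if_neg h1]
          have hj : i - r₁ < r₂ := by omega
          obtain ⟨l, hl⟩ := h2s (i - r₁) hj
          refine ⟨l, ?_⟩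
          have he : i + 1 - r₁ = (i - r₁) + 1 := by omega
          rw [he, hl, mul_assoc]
    · intro i hi
      by_cases h0 : i < r₁
      · simp only [if_pos h0]; exact h1v i (by omega)
      · simp only [if_neg h0]
        exact Vset_mul_left hxN (h2v (i - r₁) (by omega))
  | inv x hx ihx =>
    obtain ⟨r, f, h0, hr, hs, hv⟩ := ihx
    have hxN : x ∈ N := hNA ▸ hx
    refine ⟨r, fun i => x⁻¹ * f (r - i), ?_, ?_, ?_, ?_⟩
    · beta_reduce
      rw [Nat.sub_zero, hr, inv_mul_cancel]
    · beta_reduce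
      rw [Nat.sub_self, h0, mul_one]
    · intro i hi
      set j := r - i - 1 with hj
      obtain ⟨l, hl⟩ := hs j (by omega)
      refine ⟨lInv l, ?_⟩
      beta_reduce
      have e2 : r - (i + 1) = j := by omega
      have e1 : r - i = j + 1 := by omega
      rw [e2, e1, hl, mul_assoc x⁻¹, mul_assoc (f j), mk_letter_cancel, mul_one]
    · intro i hi
      exact Vset_mul_left (inv_mem hxN) (hv (r - i) (by omega))

/-- One-step crossing lemma: a step entering the set of words with prefix `P'`
must come from the vertex `mk P'.dropLast`. -/
lemma step_enters_prefix {g g' : FreeGroup α} (h : IsStep g g') {P' : List (α × Bool)}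
    (hne : P' ≠ []) (h1 : P' <+: g'.toWord) (h2 : ¬ P' <+: g.toWord) :
    g = mk P'.dropLast := by
  obtain ⟨l, rfl⟩ := h
  obtain ⟨a, b, c, ha, hb, hc⟩ := toWord_mul_decomp g (mk [l])
  have hl : (mk [l]).toWord = [l] := toWord_mk_reduced (List.isChain_singleton _)
  rw [hl] at hb
  rcases List.eq_nil_or_concat b with rfl | ⟨b₀, z, hbz⟩
  · rw [List.append_nil] at ha
    rw [invRev_empty, List.nil_append] at hb
    have hg' : (g * mk [l]).toWord = g.toWord ++ [l] := by rw [hc, ← ha, ← hb]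
    rw [hg'] at h1
    have hlen : P'.length ≤ g.toWord.length + 1 := by
      have := h1.length_le
      simpa using this
    by_cases hle : P'.length ≤ g.toWord.length
    · exact absurd (List.prefix_of_prefix_length_le h1 (g.toWord.prefix_append [l]) hle) h2
    · have hfull : P' = g.toWord ++ [l] := by
        refine List.Sublist.eq_of_length h1.sublist ?_
        simp
        omega
      rw [hfull, List.dropLast_concat, mk_toWord]
  · rw [List.concat_eq_append] at hbz
    subst hbz
    rw [invRev_concat] at hb
    have hb' : l = lInv z ∧ [] = invRev b₀ ++ c := by
      rw [List.cons_append] at hb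
      exact ⟨head_eq_of_cons_eq hb, (List.cons.injEq _ _ _ _ ▸ hb).2⟩
    obtain ⟨hlz, hnil⟩ := hb'
    have hb₀ : invRev b₀ = [] := by
      rcases List.append_eq_nil_iff.mp hnil.symm with ⟨h', h''⟩
      exact h'
    have hcnil : c = [] := by
      rcases List.append_eq_nil_iff.mp hnil.symm with ⟨h', h''⟩
      exact h''
    have hsub : (g * mk [l]).toWord <+: g.toWord := by
      rw [hc, hcnil, List.append_nil, ha]
      exact ⟨b₀ ++ [z], rfl⟩
    exact absurd (h1.trans hsub) h2

/-- Crossing lemma: a path entering the prefix cone of `P'` passes through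
`mk P'.dropLast`. -/
lemma crossing {P' : List (α × Bool)} (hne : P' ≠ []) {r : ℕ} {f : ℕ → FreeGroup α}
    (hs : ∀ i < r, IsStep (f i) (f (i + 1)))
    (h0 : ¬ P' <+: (f 0).toWord) (hr : P' <+: (f r).toWord) :
    ∃ i ≤ r, f i = mk P'.dropLast := by
  induction r with
  | zero => exact absurd hr h0
  | succ r ih =>
    by_cases h : P' <+: (f r).toWord
    · obtain ⟨i, hi, hfi⟩ := ih (fun i hi => hs i (by omega)) h
      exact ⟨i, by omega, hfi⟩
    · exact ⟨r, by omega, step_enters_prefix (hs r (by omega)) hne hr h⟩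


/-- Every prefix of (the reduced word of) an element of `N` lies in `Vset N A`. -/
lemma prefix_mem_Vset {N : Subgroup (FreeGroup α)} {A : Set (FreeGroup α)}
    (hNA : Subgroup.closure A = N) {n : FreeGroup α} (hn : n ∈ N)
    {P : List (α × Bool)} (hP : P <+: n.toWord) : mk P ∈ Vset N A := by
  by_cases hfull : P = n.toWord
  · exact ⟨n, hn, [], Or.inl rfl, by rw [← one_eq_mk, mul_one, hfull, mk_toWord]⟩
  · have hlt : P.length < n.toWord.length := by
      rcases Nat.lt_or_ge P.length n.toWord.length with h | h
      · exact h
      · exact absurd (List.Sublist.eq_of_length hP.sublist (le_antisymm hP.length_le h))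
          hfull
    set P' := P ++ [n.toWord[P.length]'hlt] with hP'
    have hPtake : P = n.toWord.take P.length := List.prefix_iff_eq_take.mp hP
    have hP'take : P' = n.toWord.take (P.length + 1) := by
      rw [hP', ← List.take_concat_get, List.concat_eq_append, ← hPtake]
    have hP'pre : P' <+: n.toWord := by
      rw [hP'take]; exact List.take_prefix _ _
    have hP'ne : P' ≠ [] := by simp [hP']
    have hdrop : P'.dropLast = P := by rw [hP', List.dropLast_concat]
    obtain ⟨r, f, h0, hr, hs, hv⟩ := path_to hNA hn
    have h0' : ¬ P' <+: (f 0).toWord := by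
      rw [h0, toWord_one]
      intro hcon
      exact hP'ne (List.prefix_nil.mp hcon)
    have hr' : P' <+: (f r).toWord := by rw [hr]; exact hP'pre
    obtain ⟨i, hi, hfi⟩ := crossing hP'ne hs h0' hr'
    rw [hdrop] at hfi
    rw [← hfi]
    exact hv i hi

lemma prefixes_finite (M : List (α × Bool)) : {L : List (α × Bool) | L <+: M}.Finite := by
  apply Set.Finite.subset (Set.finite_range (fun i : Fin (M.length + 1) => M.take i))
  intro L hL
  refine ⟨⟨L.length, by have := hL.length_le; omega⟩, ?_⟩
  exact (List.prefix_iff_eq_take.mp hL).symm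

/-- Forward direction: if `N` is finitely generated, the core vertex set is finite. -/
lemma core_finite_of_fg {N : Subgroup (FreeGroup α)} (h : N.FG) :
    {v : FreeGroup α ⧸ N | ∃ w : FreeGroup α,
      w ≠ 1 ∧ IsCyclicallyReduced w ∧ w • v = v}.Finite := by
  obtain ⟨A, hNA, hAfin⟩ := (Subgroup.fg_iff N).mp h
  set PS : Set (List (α × Bool)) :=
    {[]} ∪ ⋃ a ∈ A, ({L | L <+: a.toWord} ∪ {L | L <+: (a⁻¹).toWord}) with hPS
  have hPSfin : PS.Finite := by
    refine (Set.finite_singleton _).union (hAfin.biUnion fun a _ => ?_)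
    exact (prefixes_finite _).union (prefixes_finite _)
  apply Set.Finite.subset (hPSfin.image
    (fun L => (QuotientGroup.mk ((mk L)⁻¹) : FreeGroup α ⧸ N)))
  rintro v ⟨w, hw1, hwcr, hwv⟩
  obtain ⟨g, rfl⟩ := QuotientGroup.mk_surjective v
  have hwg : (QuotientGroup.mk (w * g) : FreeGroup α ⧸ N) = QuotientGroup.mk g := hwv
  have hnN : g⁻¹ * w⁻¹ * g ∈ N := by
    have := QuotientGroup.eq.mp hwg
    rwa [mul_inv_rev] at this

  obtain ⟨k, hk⟩ := exists_prefix_of_fixes w g hw1 hwcr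
  have hmain : ∃ m ∈ N, (g⁻¹).toWord <+: m.toWord := by
    rcases hk with hk | hk
    · refine ⟨g⁻¹ * w ^ k * g, ?_, hk⟩
      have he : g⁻¹ * w ^ k * g = ((g⁻¹ * w⁻¹ * g)⁻¹) ^ k := by
        have := conj_pow (a := g⁻¹) (b := w) (i := k)
        rw [inv_inv] at this
        rw [← this]
        congr 1
        group
      rw [he]
      exact pow_mem (inv_mem hnN) k
    · refine ⟨g⁻¹ * w⁻¹ ^ k * g, ?_, hk⟩
      have he : g⁻¹ * w⁻¹ ^ k * g = (g⁻¹ * w⁻¹ * g) ^ k := by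
        have := conj_pow (a := g⁻¹) (b := w⁻¹) (i := k)
        rw [inv_inv] at this
        rw [← this]
      rw [he]
      exact pow_mem hnN k
  obtain ⟨m, hmN, hpre⟩ := hmain
  have hV : (g⁻¹ : FreeGroup α) ∈ Vset N A := by
    have := prefix_mem_Vset hNA hmN hpre
    rwa [mk_toWord] at this
  obtain ⟨n', hn', L, hL, heq⟩ := hV
  refine ⟨L, ?_, ?_⟩
  · rcases hL with rfl | ⟨a, ha, hpa⟩
    · exact Or.inl rfl
    · refine Or.inr (Set.mem_biUnion ha ?_)
      rcases hpa with h' | h'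
      · exact Or.inl h'
      · exact Or.inr h'
  · -- mk (mk L)⁻¹ = mk g
    rw [QuotientGroup.eq]
    -- ((mk L)⁻¹)⁻¹ * g ∈ N
    have hg : g = (mk L)⁻¹ * n'⁻¹ := by
      rw [← mul_inv_rev, ← heq, inv_inv]
    rw [inv_inv, hg, ← mul_assoc, mul_inv_cancel, one_mul]
    exact inv_mem hn'


lemma exists_min_rep (N : Subgroup (FreeGroup α)) (v : FreeGroup α ⧸ N) :
    ∃ g : FreeGroup α, (QuotientGroup.mk g : FreeGroup α ⧸ N) = v ∧
      ∀ h : FreeGroup α, (QuotientGroup.mk h : FreeGroup α ⧸ N) = v →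
        norm g ≤ norm h := by
  classical
  have hne : ∃ m : ℕ, ∃ g : FreeGroup α,
      (QuotientGroup.mk g : FreeGroup α ⧸ N) = v ∧ norm g = m := by
    obtain ⟨g₀, hg₀⟩ := QuotientGroup.mk_surjective v
    exact ⟨norm g₀, g₀, hg₀, rfl⟩
  obtain ⟨g, hg, hm⟩ := Nat.find_spec hne
  refine ⟨g, hg, fun h hh => ?_⟩
  rw [hm]
  exact Nat.find_min' hne ⟨h, hh, rfl⟩

lemma mem_of_mk_eq_mk {N : Subgroup (FreeGroup α)} {a b : FreeGroup α}
    (h : (QuotientGroup.mk a : FreeGroup α ⧸ N) = QuotientGroup.mk b) :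
    a⁻¹ * b ∈ N := QuotientGroup.eq.mp h

/-- Converse direction: if the core vertex set is finite, `N` is finitely generated. -/
lemma fg_of_core_finite [Finite α] {N : Subgroup (FreeGroup α)}
    (hS : {v : FreeGroup α ⧸ N | ∃ w : FreeGroup α,
      w ≠ 1 ∧ IsCyclicallyReduced w ∧ w • v = v}.Finite) : N.FG := by
  classical
  set S := {v : FreeGroup α ⧸ N | ∃ w : FreeGroup α,
      w ≠ 1 ∧ IsCyclicallyReduced w ∧ w • v = v} with hSdef
  choose rep hrep hmin using fun v => exists_min_rep N v
  set T : Set (FreeGroup α) := (fun q : (FreeGroup α ⧸ N) × (α × Bool) =>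
      (rep (mk [q.2] • q.1))⁻¹ * mk [q.2] * rep q.1) '' (S ×ˢ Set.univ) with hT
  have hTfin : T.Finite := Set.Finite.image _ (hS.prod Set.finite_univ)
  have hTN : ∀ t ∈ T, t ∈ N := by
    rintro t ⟨⟨v, l⟩, ⟨hv, -⟩, rfl⟩
    have h1 : (QuotientGroup.mk (rep (mk [l] • v)) : FreeGroup α ⧸ N)
        = QuotientGroup.mk (mk [l] * rep v) := by
      rw [hrep]
      show mk [l] • v = mk [l] • (QuotientGroup.mk (rep v))
      rw [hrep]
    have := mem_of_mk_eq_mk h1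
    rwa [← mul_assoc] at this
  have key : ∀ m : ℕ, ∀ n ∈ N, norm n ≤ m → n ∈ Subgroup.closure T := by
    intro m
    induction m using Nat.strong_induction_on with
    | _ m ih =>
    intro n hnN hnm
    by_cases hn1 : n = 1
    · rw [hn1]; exact one_mem _
    obtain ⟨u, c, hdec, hc1, hccr, hnorm⟩ := cyc_decomp n hn1
    set v₀ : FreeGroup α ⧸ N := QuotientGroup.mk u⁻¹ with hv₀
    have hcfix : c • v₀ = v₀ := by
      show (QuotientGroup.mk (c * u⁻¹) : FreeGroup α ⧸ N) = QuotientGroup.mk u⁻¹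
      rw [QuotientGroup.eq]
      have he : (c * u⁻¹)⁻¹ * u⁻¹ = n⁻¹ := by rw [hdec]; group
      rw [he]
      exact inv_mem hnN
    have hv₀S : v₀ ∈ S := ⟨c, hc1, hccr, hcfix⟩
    have hsuffix : ∀ D E : List (α × Bool), c.toWord = E ++ D →
        (rep (mk D • v₀))⁻¹ * mk D * rep v₀ ∈ Subgroup.closure T := by
      intro D
      induction D with
      | nil =>
        intro E hE
        have h1 : mk ([] : List (α × Bool)) = (1 : FreeGroup α) := one_eq_mk.symm
        rw [h1, one_smul, mul_one, inv_mul_cancel]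
        exact one_mem _
      | cons l D' ihD =>
        intro E hE
        set v' := mk D' • v₀ with hv'
        set w' := mk D' * mk (E ++ [l]) with hw'
        have hce : c = mk (E ++ [l]) * mk D' := by
          conv_lhs => rw [← mk_toWord (x := c), hE]
          rw [mul_mk]
          congr 1
          simp
        have hconj : w' = mk D' * c * (mk D')⁻¹ := by
          rw [hce, hw']; group
        have hw'1 : w' ≠ 1 := by
          intro hcon
          apply hc1
          have hcc : c = (mk D')⁻¹ * w' * mk D' := by rw [hconj]; group
          rw [hcon, mul_one] at hcc
          rw [hcc, inv_mul_cancel]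
        have hcrw' : IsCyclicallyReduced w' := by
          intro gq
          have h1 : norm w' ≤ norm c := by
            calc norm w' ≤ norm (mk D') + norm (mk (E ++ [l])) := norm_mul_le _ _
              _ ≤ D'.length + (E ++ [l]).length :=
                  add_le_add norm_mk_le norm_mk_le
              _ = (E ++ (l :: D')).length := by simp; omega
              _ = norm c := by rw [norm_def, hE]
          have h2 : norm c ≤ norm (gq * w' * gq⁻¹) := by
            have he : gq * w' * gq⁻¹ = (gq * mk D') * c * (gq * mk D')⁻¹ := by
              rw [hconj]; group
            rw [he]
            exact hccr (gq * mk D')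
          omega
        have hfix : w' • v' = v' := by
          have he : w' * mk D' = mk D' * c := by rw [hconj]; group
          rw [hv', smul_smul, he, ← smul_smul, hcfix]
        have hv'S : v' ∈ S := ⟨w', hw'1, hcrw', hfix⟩
        have hmem : (rep (mk [l] • v'))⁻¹ * mk [l] * rep v' ∈ T :=
          ⟨(v', l), ⟨hv'S, Set.mem_univ _⟩, rfl⟩
        have hstep : mk [l] • v' = mk (l :: D') • v₀ := by
          rw [hv', smul_smul, mul_mk, List.singleton_append]
        have hsplit : (rep (mk (l :: D') • v₀))⁻¹ * mk (l :: D') * rep v₀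
            = ((rep (mk [l] • v'))⁻¹ * mk [l] * rep v')
              * ((rep v')⁻¹ * mk D' * rep v₀) := by
          rw [← hstep]
          have hx : mk (l :: D') = mk [l] * mk D' := by
            rw [mul_mk, List.singleton_append]
          rw [hx]
          group
        rw [hsplit]
        exact mul_mem (Subgroup.subset_closure hmem)
          (ihD (E ++ [l]) (by rw [hE, List.append_assoc, List.singleton_append]))
    have hccv : (rep v₀)⁻¹ * c * rep v₀ ∈ Subgroup.closure T := by
      have hs := hsuffix c.toWord [] (by simp)
      rw [mk_toWord, hcfix] at hs
      exact hs
    set m' := u * rep v₀ with hm'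
    have hm'N : m' ∈ N := by
      have h1 : (QuotientGroup.mk (rep v₀) : FreeGroup α ⧸ N) = QuotientGroup.mk u⁻¹ :=
        (hrep v₀).trans hv₀
      have h2 := mem_of_mk_eq_mk h1
      have h3 := inv_mem h2
      rwa [mul_inv_rev, inv_inv, inv_inv] at h3
    have hnormlt : norm m' < m := by
      have h1 : norm (rep v₀) ≤ norm u := by
        have := hmin v₀ u⁻¹ hv₀.symm
        rwa [norm_inv_eq] at this
      have h2 : norm m' ≤ norm u + norm (rep v₀) := norm_mul_le _ _
      have h3 : 1 ≤ norm c := by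
        rcases Nat.eq_zero_or_pos (norm c) with h | h
        · exact absurd (norm_eq_zero.mp h) hc1
        · exact h
      omega
    have ihm' : m' ∈ Subgroup.closure T := ih (norm m') hnormlt m' hm'N le_rfl
    have hfinal : n = m' * ((rep v₀)⁻¹ * c * rep v₀) * m'⁻¹ := by
      rw [hm', hdec]; group
    rw [hfinal]
    exact mul_mem (mul_mem ihm' hccv) (inv_mem ihm')
  rw [Subgroup.fg_iff]
  refine ⟨T, le_antisymm ((Subgroup.closure_le N).mpr hTN) ?_, hTfin⟩
  intro n hn
  exact key (norm n) n hn le_rfl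

end SchreierCore

/-- **Stallings core criterion.**  Let `N` be a subgroup of a finitely generated free
group `F(X)`.  The vertices of the Schreier graph `Γ(N\F,X)` are the cosets `F(X) ⧸ N`,
with an edge `v → x • v` for each generator `x ∈ X`, and a word `w` labels a closed path
at `v` iff `w • v = v`.  The core of the Schreier graph (the subgraph spanned by all
vertices and edges lying on reduced closed paths) has vertex set exactly the cosets
fixed by some nontrivial cyclically reduced word; since `X` is finite, the core is a
finite graph iff its vertex set is finite.  Thus: `N` is finitely generated iff the
core of its Schreier graph is finite. -/
theorem schreier_core_criterion {X : Type*} [Fintype X] [DecidableEq X]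
    (N : Subgroup (FreeGroup X)) :
    N.FG ↔
      {v : FreeGroup X ⧸ N | ∃ w : FreeGroup X,
        w ≠ 1 ∧ IsCyclicallyReduced w ∧ w • v = v}.Finite := by
  constructor
  · exact SchreierCore.core_finite_of_fg
  · exact SchreierCore.fg_of_core_finite
end

section
/- Let F₂ = ⟨U,V⟩ act on ℤ² linearly via Sanov matrices U = [[1,2],[0,1]], V = [[1,0],[2,1]], and let L_q = qℤ² for an integer q ≥ 2. Then the abelianization of the semidirect product L_q ⋊ F₂ is isomorphic to ℤ² ⊕ (ℤ/2ℤ)². -/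
abbrev SL2 := Matrix.SpecialLinearGroup (Fin 2) ℤ

/-- The Sanov matrix `U = [[1,2],[0,1]]`. -/
def Umat : SL2 := ⟨!![1, 2; 0, 1], by norm_num [Matrix.det_fin_two_of]⟩

/-- The Sanov matrix `V = [[1,0],[2,1]]`. -/
def Vmat : SL2 := ⟨!![1, 0; 2, 1], by norm_num [Matrix.det_fin_two_of]⟩

/-- `F₂ = ⟨U,V⟩ ≤ SL(2,ℤ)`, free of rank 2 by Sanov's theorem. -/
def Fsanov : Subgroup SL2 := Subgroup.closure {Umat, Vmat}

/-- The lattice `L_q = qℤ² ≤ ℤ²`. -/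
def Lq (q : ℤ) : AddSubgroup (Fin 2 → ℤ) where
  carrier := {v | ∀ i, q ∣ v i}
  add_mem' ha hb i := dvd_add (ha i) (hb i)
  zero_mem' i := dvd_zero q
  neg_mem' ha i := dvd_neg.mpr (ha i)

theorem mulVec_mem_Lq (q : ℤ) (A : Matrix (Fin 2) (Fin 2) ℤ) {v : Fin 2 → ℤ}
    (hv : v ∈ Lq q) : A.mulVec v ∈ Lq q := fun i => by
  have h : A.mulVec v i = A i 0 * v 0 + A i 1 * v 1 := by
    simp [Matrix.mulVec, dotProduct, Fin.sum_univ_two]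
  rw [h]
  exact dvd_add ((hv 0).mul_left _) ((hv 1).mul_left _)

/-- The linear action of `A ∈ SL(2,ℤ)` restricted to the lattice `L_q`. -/
def lqEquiv (q : ℤ) (A : SL2) : (Lq q) ≃+ (Lq q) where
  toFun v := ⟨(A : Matrix (Fin 2) (Fin 2) ℤ).mulVec v.1, mulVec_mem_Lq q _ v.2⟩
  invFun v := ⟨((A⁻¹ : SL2) : Matrix (Fin 2) (Fin 2) ℤ).mulVec v.1, mulVec_mem_Lq q _ v.2⟩
  left_inv v := Subtype.ext <| by
    have h : ((A⁻¹ : SL2) : Matrix (Fin 2) (Fin 2) ℤ) * (A : Matrix (Fin 2) (Fin 2) ℤ) = 1 := by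
      rw [← Matrix.SpecialLinearGroup.coe_mul, inv_mul_cancel]; rfl
    show ((A⁻¹ : SL2) : Matrix (Fin 2) (Fin 2) ℤ).mulVec ((A : Matrix (Fin 2) (Fin 2) ℤ).mulVec v.1) = v.1
    rw [Matrix.mulVec_mulVec, h, Matrix.one_mulVec]
  right_inv v := Subtype.ext <| by
    have h : (A : Matrix (Fin 2) (Fin 2) ℤ) * ((A⁻¹ : SL2) : Matrix (Fin 2) (Fin 2) ℤ) = 1 := by
      rw [← Matrix.SpecialLinearGroup.coe_mul, mul_inv_cancel]; rfl
    show (A : Matrix (Fin 2) (Fin 2) ℤ).mulVec (((A⁻¹ : SL2) : Matrix (Fin 2) (Fin 2) ℤ).mulVec v.1) = v.1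
    rw [Matrix.mulVec_mulVec, h, Matrix.one_mulVec]
  map_add' v w := Subtype.ext <| by simp [Matrix.mulVec_add]

/-- The action of `SL(2,ℤ)` on the (multiplicatively written) lattice `L_q`. -/
def rhoq (q : ℤ) : SL2 →* MulAut (Multiplicative (Lq q)) where
  toFun A := AddEquiv.toMultiplicative (lqEquiv q A)
  map_one' := by
    ext v : 1
    exact congrArg Multiplicative.ofAdd <| Subtype.ext <| by simp [lqEquiv]
  map_mul' A B := by
    ext v : 1
    exact congrArg Multiplicative.ofAdd <| Subtype.ext <| by
      simp [lqEquiv, Matrix.mul_apply, Fin.sum_univ_two]; ring_nf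

/-- The semidirect product `L_q ⋊ F₂`. -/
abbrev LqRtimesF2 (q : ℤ) :=
  Multiplicative (Lq q) ⋊[(rhoq q).comp Fsanov.subtype] Fsanov


section Aux
open Matrix

lemma Umat_inv_coe : ((Umat⁻¹ : SL2) : Matrix (Fin 2) (Fin 2) ℤ) = !![1, -2; 0, 1] := by
  rw [Matrix.SpecialLinearGroup.coe_inv]
  simp [Umat, Matrix.adjugate_fin_two_of]

lemma Vmat_inv_coe : ((Vmat⁻¹ : SL2) : Matrix (Fin 2) (Fin 2) ℤ) = !![1, 0; -2, 1] := by
  rw [Matrix.SpecialLinearGroup.coe_inv]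
  simp [Vmat, Matrix.adjugate_fin_two_of]

lemma Umat_zpow (n : ℤ) : ((Umat ^ n : SL2) : Matrix (Fin 2) (Fin 2) ℤ) = !![1, 2*n; 0, 1] := by
  induction n using Int.induction_on with
  | zero => simp [Matrix.one_fin_two]
  | succ n ih =>
      rw [_root_.zpow_add, zpow_one, Matrix.SpecialLinearGroup.coe_mul, ih]
      ext i j
      fin_cases i <;> fin_cases j <;>
        simp [Umat, Matrix.mul_apply, Fin.sum_univ_two] <;> ring
  | pred n ih =>
      rw [sub_eq_add_neg, _root_.zpow_add, Matrix.SpecialLinearGroup.coe_mul, ih, _root_.zpow_neg_one,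
        Umat_inv_coe]
      ext i j
      fin_cases i <;> fin_cases j <;>
        simp [Matrix.mul_apply, Fin.sum_univ_two] <;> ring

lemma Vmat_zpow (n : ℤ) : ((Vmat ^ n : SL2) : Matrix (Fin 2) (Fin 2) ℤ) = !![1, 0; 2*n, 1] := by
  induction n using Int.induction_on with
  | zero => simp [Matrix.one_fin_two]
  | succ n ih =>
      rw [_root_.zpow_add, zpow_one, Matrix.SpecialLinearGroup.coe_mul, ih]
      ext i j
      fin_cases i <;> fin_cases j <;>
        simp [Vmat, Matrix.mul_apply, Fin.sum_univ_two] <;> ring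
  | pred n ih =>
      rw [sub_eq_add_neg, _root_.zpow_add, Matrix.SpecialLinearGroup.coe_mul, ih, _root_.zpow_neg_one,
        Vmat_inv_coe]
      ext i j
      fin_cases i <;> fin_cases j <;>
        simp [Matrix.mul_apply, Fin.sum_univ_two] <;> ring

abbrev Q2 := Fin 2 → ℚ

instance sl2QAction : MulAction SL2 Q2 where
  smul A v := ((A : Matrix (Fin 2) (Fin 2) ℤ).map (Int.cast : ℤ → ℚ)).mulVec v
  one_smul v := by
    show ((((1:SL2) : Matrix (Fin 2) (Fin 2) ℤ)).map _).mulVec v = v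
    rw [Matrix.SpecialLinearGroup.coe_one, Matrix.map_one _ (by simp) (by simp),
      Matrix.one_mulVec]
  mul_smul A B v := by
    show ((((A*B:SL2) : Matrix (Fin 2) (Fin 2) ℤ)).map _).mulVec v = _
    rw [Matrix.SpecialLinearGroup.coe_mul]
    show ((_ * _ : Matrix (Fin 2) (Fin 2) ℤ).map (⇑(Int.castRingHom ℚ))).mulVec v = _
    rw [Matrix.map_mul, ← Matrix.mulVec_mulVec]
    rfl

lemma sl2_smul_apply (A : SL2) (v : Q2) (i : Fin 2) :
    (A • v) i = ((A : Matrix (Fin 2) (Fin 2) ℤ) i 0 : ℚ) * v 0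
      + ((A : Matrix (Fin 2) (Fin 2) ℤ) i 1 : ℚ) * v 1 := by
  show (((A : Matrix (Fin 2) (Fin 2) ℤ).map _).mulVec v) i = _
  simp [Matrix.mulVec, dotProduct, Fin.sum_univ_two, Matrix.map_apply]

lemma key_abs {c x y : ℚ} (hc : 2 ≤ |c|) (h : |x| < |y|) : |y| < |x + c * y| := by
  have h1 : |c * y| ≤ |x + c * y| + |x| := by
    have h2 := abs_add_le (x + c * y) (-x)
    rw [abs_neg] at h2
    have h3 : x + c * y + -x = c * y := by ring
    rwa [h3] at h2
  have h2 : 2 * |y| ≤ |c * y| := by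
    rw [abs_mul]
    have := abs_nonneg y
    nlinarith
  linarith

lemma Umem : Umat ∈ Fsanov := Subgroup.subset_closure (by simp)
lemma Vmem : Vmat ∈ Fsanov := Subgroup.subset_closure (by simp)

def XPP : Bool → Set Q2 :=
  fun b => bif b then {v : Q2 | |v 1| < |v 0|} else {v : Q2 | |v 0| < |v 1|}

@[simp] lemma mem_XPP_true (v : Q2) : v ∈ XPP true ↔ |v 1| < |v 0| := Iff.rfl
@[simp] lemma mem_XPP_false (v : Q2) : v ∈ XPP false ↔ |v 0| < |v 1| := Iff.rfl

set_option synthInstance.maxHeartbeats 1000000 in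
set_option maxHeartbeats 1000000 in
open Monoid Pointwise in
lemma exists_pi : ∃ π : Fsanov →* Multiplicative (ℤ × ℤ),
    π ⟨Umat, Umem⟩ = Multiplicative.ofAdd (1, 0) ∧
    π ⟨Vmat, Vmem⟩ = Multiplicative.ofAdd (0, 1) := by
  classical
  set f : ∀ _ : Bool, Multiplicative ℤ →* SL2 :=
    fun b => zpowersHom SL2 (bif b then Umat else Vmat) with hf
  have hcard : (3 : Cardinal) ≤ Cardinal.mk Bool ∨
      ∃ i : Bool, (3 : Cardinal) ≤ Cardinal.mk (Multiplicative ℤ) := by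
    right
    refine ⟨true, ?_⟩
    have : Cardinal.mk (Multiplicative ℤ) = Cardinal.aleph0 := Cardinal.mk_int
    rw [this]
    simpa using (Cardinal.nat_lt_aleph0 3).le
  have hXnonempty : ∀ i, (XPP i).Nonempty := by
    intro i
    cases i
    · exact ⟨![0, 1], by simp⟩
    · exact ⟨![1, 0], by simp⟩
  have hXdisj : Pairwise (Function.onFun Disjoint XPP) := by
    intro i j hij
    rw [Function.onFun, Set.disjoint_left]
    intro v hvi hvj
    cases i <;> cases j <;> simp_all <;> linarith
  have habs : ∀ n : ℤ, n ≠ 0 → (2:ℚ) ≤ |((2 * n : ℤ) : ℚ)| := by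
    intro n hn
    have h1 : (2:ℤ) ≤ |2 * n| := by
      rcases lt_or_gt_of_ne hn with h | h
      · rw [abs_of_nonpos (by omega)]; omega
      · rw [abs_of_nonneg (by omega)]; omega
    calc (2:ℚ) = ((2:ℤ):ℚ) := by norm_num
    _ ≤ ((|2 * n| : ℤ) : ℚ) := by exact_mod_cast h1
    _ = |((2 * n : ℤ) : ℚ)| := Int.cast_abs
  have hpp : Pairwise fun i j => ∀ h : Multiplicative ℤ, h ≠ 1 → f i h • XPP j ⊆ XPP i := by
    intro i j hij h hne
    have hn : Multiplicative.toAdd h ≠ 0 := by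
      simpa using fun hh => hne (by simpa using congrArg Multiplicative.ofAdd hh)
    intro p hp
    rw [Set.mem_smul_set] at hp
    obtain ⟨w, hw, rfl⟩ := hp
    set n := Multiplicative.toAdd h with hndef
    cases i <;> cases j <;> try exact absurd rfl hij
    · -- i = false (V), j = true (U): need |(V^n • w) 0| < |(V^n • w) 1|
      have hfv : f false h = Vmat ^ n := by simp [hf, zpowersHom_apply, hndef]
      have h0 : (f false h • w) 0 = w 0 := by
        rw [hfv, sl2_smul_apply, Vmat_zpow]; simp
      have h1 : (f false h • w) 1 = ((2*n : ℤ) : ℚ) * w 0 + w 1 := by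
        rw [hfv, sl2_smul_apply, Vmat_zpow]
        simp
        try push_cast
        try ring
      have hwmem : |w 1| < |w 0| := (mem_XPP_true w).1 hw
      have := key_abs (habs n hn) hwmem
      rw [mem_XPP_false, h0, h1]
      rwa [show w 1 + ((2*n : ℤ) : ℚ) * w 0 = ((2*n : ℤ) : ℚ) * w 0 + w 1 from by ring] at this
    · -- i = true (U), j = false (V): need |(U^n • w) 1| < |(U^n • w) 0|
      have hfu : f true h = Umat ^ n := by simp [hf, zpowersHom_apply, hndef]
      have h0 : (f true h • w) 0 = w 0 + ((2*n : ℤ) : ℚ) * w 1 := by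
        rw [hfu, sl2_smul_apply, Umat_zpow]; simp
      have h1 : (f true h • w) 1 = w 1 := by
        rw [hfu, sl2_smul_apply, Umat_zpow]; simp
      have hwmem : |w 0| < |w 1| := (mem_XPP_false w).1 hw
      have := key_abs (habs n hn) hwmem
      rw [mem_XPP_true, h0, h1]
      exact this
  have hinj : Function.Injective (CoprodI.lift f) :=
    CoprodI.lift_injective_of_ping_pong f hcard XPP hXnonempty hXdisj hpp
  have hrange : (CoprodI.lift f).range = Fsanov := by
    apply le_antisymm
    · apply CoprodI.lift_range_le
      intro b
      rintro A ⟨x, rfl⟩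
      cases b
      · exact Subgroup.zpow_mem _ Vmem _
      · exact Subgroup.zpow_mem _ Umem _
    · rw [Fsanov, Subgroup.closure_le]
      rintro A (rfl | rfl)
      · exact ⟨CoprodI.of (i := true) (Multiplicative.ofAdd 1), by simp [hf]⟩
      · exact ⟨CoprodI.of (i := false) (Multiplicative.ofAdd 1), by simp [hf]⟩
  set e : CoprodI (fun _ : Bool => Multiplicative ℤ) ≃* Fsanov :=
    (MonoidHom.ofInjective hinj).trans (MulEquiv.subgroupCongr hrange) with he
  set g : ∀ _ : Bool, Multiplicative ℤ →* Multiplicative (ℤ × ℤ) :=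
    fun b => AddMonoidHom.toMultiplicative
      (bif b then AddMonoidHom.inl ℤ ℤ else AddMonoidHom.inr ℤ ℤ) with hg
  refine ⟨(CoprodI.lift g).comp e.symm.toMonoidHom, ?_, ?_⟩
  · have heU : e (CoprodI.of (i := true) (Multiplicative.ofAdd 1)) = ⟨Umat, Umem⟩ := by
      apply Subtype.ext
      simp [he, hf, MonoidHom.ofInjective_apply]
    have : e.symm ⟨Umat, Umem⟩ = CoprodI.of (i := true) (Multiplicative.ofAdd 1) := by
      rw [← heU, MulEquiv.symm_apply_apply]
    simp only [MonoidHom.comp_apply, MulEquiv.coe_toMonoidHom, this, CoprodI.lift_of]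
    rfl
  · have heV : e (CoprodI.of (i := false) (Multiplicative.ofAdd 1)) = ⟨Vmat, Vmem⟩ := by
      apply Subtype.ext
      simp [he, hf, MonoidHom.ofInjective_apply]
    have : e.symm ⟨Vmat, Vmem⟩ = CoprodI.of (i := false) (Multiplicative.ofAdd 1) := by
      rw [← heV, MulEquiv.symm_apply_apply]
    simp only [MonoidHom.comp_apply, MulEquiv.coe_toMonoidHom, this, CoprodI.lift_of]
    rfl

lemma Lq_div_add (q a b : ℤ) (ha : q ∣ a) (hb : q ∣ b) : (a + b) / q = a / q + b / q := by
  obtain ⟨x, rfl⟩ := ha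
  obtain ⟨y, rfl⟩ := hb
  by_cases hq : q = 0
  · subst hq; simp
  · rw [← mul_add, Int.mul_ediv_cancel_left _ hq, Int.mul_ediv_cancel_left _ hq,
      Int.mul_ediv_cancel_left _ hq]

def nuHom (q : ℤ) : (Lq q) →+ ZMod 2 × ZMod 2 where
  toFun v := (((v.1 0 / q : ℤ) : ZMod 2), ((v.1 1 / q : ℤ) : ZMod 2))
  map_zero' := by
    have h : ∀ i : Fin 2, ((0 : Lq q) : Fin 2 → ℤ) i = 0 := fun i => rfl
    simp [h]
  map_add' a b := by
    have h : ∀ i : Fin 2, ((a + b : Lq q) : Fin 2 → ℤ) i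
        = (a : Fin 2 → ℤ) i + (b : Fin 2 → ℤ) i := fun i => rfl
    simp only [h, Lq_div_add q _ _ (a.2 _) (b.2 _), Int.cast_add, Prod.mk_add_mk]

lemma red2_one (A : SL2) (hA : A ∈ Fsanov) (i j : Fin 2) :
    (((A : Matrix (Fin 2) (Fin 2) ℤ) i j : ZMod 2)) = (1 : Matrix (Fin 2) (Fin 2) (ZMod 2)) i j := by
  have hker : Fsanov ≤ (Matrix.SpecialLinearGroup.map (n := Fin 2) (Int.castRingHom (ZMod 2))).ker := by
    rw [Fsanov, Subgroup.closure_le]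
    intro B hB
    simp only [Set.mem_insert_iff, Set.mem_singleton_iff] at hB
    have hd : ∀ M : SL2, (M : Matrix (Fin 2) (Fin 2) ℤ).map (Int.castRingHom (ZMod 2)) = 1 →
        M ∈ (Matrix.SpecialLinearGroup.map (n := Fin 2) (Int.castRingHom (ZMod 2))).ker := by
      intro M hM
      rw [MonoidHom.mem_ker]
      apply Subtype.ext
      rw [Matrix.SpecialLinearGroup.map_apply_coe, Matrix.SpecialLinearGroup.coe_one]
      exact hM
    rcases hB with rfl | rfl
    · apply hd
      ext i j
      fin_cases i <;> fin_cases j <;> simp [Umat, Matrix.map_apply] <;> decide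
    · apply hd
      ext i j
      fin_cases i <;> fin_cases j <;> simp [Vmat, Matrix.map_apply] <;> decide
  have h1 : (A : Matrix (Fin 2) (Fin 2) ℤ).map (Int.castRingHom (ZMod 2)) = 1 := by
    have hm := hker hA
    rw [MonoidHom.mem_ker] at hm
    have := congrArg
      (fun B : Matrix.SpecialLinearGroup (Fin 2) (ZMod 2) => (B : Matrix (Fin 2) (Fin 2) (ZMod 2))) hm
    simpa [Matrix.SpecialLinearGroup.map_apply_coe] using this
  calc (((A : Matrix (Fin 2) (Fin 2) ℤ) i j : ZMod 2))
      = ((A : Matrix (Fin 2) (Fin 2) ℤ).map (Int.castRingHom (ZMod 2))) i j := rfl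
    _ = _ := by rw [h1]

lemma nu_equivariant (q : ℤ) (hqne : q ≠ 0) (A : SL2) (hA : A ∈ Fsanov) (v : Lq q) :
    nuHom q ⟨(A : Matrix (Fin 2) (Fin 2) ℤ).mulVec v.1, mulVec_mem_Lq q _ v.2⟩ = nuHom q v := by
  obtain ⟨u0, hu0⟩ := v.2 0
  obtain ⟨u1, hu1⟩ := v.2 1
  have hmv : ∀ i : Fin 2, ((A : Matrix (Fin 2) (Fin 2) ℤ).mulVec v.1) i
      = q * ((A : Matrix (Fin 2) (Fin 2) ℤ) i 0 * u0 + (A : Matrix (Fin 2) (Fin 2) ℤ) i 1 * u1) := by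
    intro i
    have h : (A : Matrix (Fin 2) (Fin 2) ℤ).mulVec v.1 i
        = (A : Matrix (Fin 2) (Fin 2) ℤ) i 0 * v.1 0 + (A : Matrix (Fin 2) (Fin 2) ℤ) i 1 * v.1 1 := by
      simp [Matrix.mulVec, dotProduct, Fin.sum_univ_two]
    rw [h, hu0, hu1]; ring
  have e00 := red2_one A hA 0 0
  have e01 := red2_one A hA 0 1
  have e10 := red2_one A hA 1 0
  have e11 := red2_one A hA 1 1
  rw [Matrix.one_apply] at e00 e01 e10 e11
  norm_num at e00 e01 e10 e11
  show (_, _) = (_, _)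
  rw [Prod.mk.injEq]
  constructor
  · show ((((A : Matrix (Fin 2) (Fin 2) ℤ).mulVec v.1) 0 / q : ℤ) : ZMod 2) = ((v.1 0 / q : ℤ) : ZMod 2)
    rw [hmv 0, Int.mul_ediv_cancel_left _ hqne, hu0, Int.mul_ediv_cancel_left _ hqne]
    push_cast
    rw [e00, e01]
    ring
  · show ((((A : Matrix (Fin 2) (Fin 2) ℤ).mulVec v.1) 1 / q : ℤ) : ZMod 2) = ((v.1 1 / q : ℤ) : ZMod 2)
    rw [hmv 1, Int.mul_ediv_cancel_left _ hqne, hu1, Int.mul_ediv_cancel_left _ hqne]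
    push_cast
    rw [e10, e11]
    ring

lemma Fsanov_hom_ext {C : Type*} [Group C] {F1 F2 : Fsanov →* C}
    (hU : F1 ⟨Umat, Umem⟩ = F2 ⟨Umat, Umem⟩) (hV : F1 ⟨Vmat, Vmem⟩ = F2 ⟨Vmat, Vmem⟩) :
    F1 = F2 := by
  ext x
  obtain ⟨g, hg⟩ := x
  induction hg using Subgroup.closure_induction with
  | mem x hx =>
      rcases hx with rfl | rfl
      · exact hU
      · exact hV
  | one => show F1 1 = F2 1; simp
  | mul x y hx hy ihx ihy =>
      show F1 (⟨x, hx⟩ * ⟨y, hy⟩) = F2 (⟨x, hx⟩ * ⟨y, hy⟩)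
      rw [_root_.map_mul, _root_.map_mul, ihx, ihy]
  | inv x hx ih =>
      show F1 (⟨x, hx⟩⁻¹) = F2 (⟨x, hx⟩⁻¹)
      rw [_root_.map_inv, _root_.map_inv, ih]

end Aux

set_option maxHeartbeats 2000000 in
set_option synthInstance.maxHeartbeats 1000000 in
/-- For every integer `q ≥ 2`, the abelianization of `L_q ⋊ F₂`
is isomorphic to `ℤ² ⊕ (ℤ/2ℤ)²`. -/
theorem abelianization_LqRtimesF2 (q : ℤ) (hq : 2 ≤ q) :
    Nonempty (Abelianization (LqRtimesF2 q) ≃*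
      Multiplicative ((ℤ × ℤ) × (ZMod 2 × ZMod 2))) := by
  classical
  have hqne : q ≠ 0 := by omega
  obtain ⟨π, hπU, hπV⟩ := exists_pi
  set φ : Fsanov →* MulAut (Multiplicative (Lq q)) := (rhoq q).comp Fsanov.subtype with hφ
  set e1 : Lq q := ⟨![q, 0], by intro i; fin_cases i <;> simp⟩ with he1
  set e2 : Lq q := ⟨![0, q], by intro i; fin_cases i <;> simp⟩ with he2
  set uel : Fsanov := (⟨Umat, Umem⟩ : Fsanov) with huel
  set vel : Fsanov := (⟨Vmat, Vmem⟩ : Fsanov) with hvel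
  set f₁ : Multiplicative (Lq q) →* Multiplicative ((ℤ × ℤ) × (ZMod 2 × ZMod 2)) :=
    AddMonoidHom.toMultiplicative
      ((AddMonoidHom.inr (ℤ × ℤ) (ZMod 2 × ZMod 2)).comp (nuHom q)) with hf₁
  set f₂ : Fsanov →* Multiplicative ((ℤ × ℤ) × (ZMod 2 × ZMod 2)) :=
    (AddMonoidHom.toMultiplicative (AddMonoidHom.inl (ℤ × ℤ) (ZMod 2 × ZMod 2))).comp π with hf₂
  have hf₁apply : ∀ v : Lq q, f₁ (Multiplicative.ofAdd v)
      = Multiplicative.ofAdd ((((0, 0) : ℤ × ℤ)), nuHom q v) := fun v => rfl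
  have hφapply : ∀ (g : Fsanov) (n : Multiplicative (Lq q)), φ g n
      = Multiplicative.ofAdd
          (⟨(g.1 : Matrix (Fin 2) (Fin 2) ℤ).mulVec (Multiplicative.toAdd n).1,
            mulVec_mem_Lq q _ (Multiplicative.toAdd n).2⟩ : Lq q) := fun g n => rfl
  have hcompat : ∀ g : Fsanov,
      f₁.comp (φ g).toMonoidHom = (MulAut.conj (f₂ g)).toMonoidHom.comp f₁ := by
    intro g
    refine MonoidHom.ext fun n => ?_
    simp only [MonoidHom.comp_apply, MulEquiv.coe_toMonoidHom, MulAut.conj_apply]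
    rw [mul_comm (f₂ g), mul_inv_cancel_right]
    rw [hφapply]
    have hn : n = Multiplicative.ofAdd (Multiplicative.toAdd n) := rfl
    conv_rhs => rw [hn]
    rw [hf₁apply, hf₁apply, nu_equivariant q hqne g.1 g.2]
  set Φ : LqRtimesF2 q →* Multiplicative ((ℤ × ℤ) × (ZMod 2 × ZMod 2)) :=
    SemidirectProduct.lift f₁ f₂ hcompat with hΦ
  set ΦA : Abelianization (LqRtimesF2 q) →* Multiplicative ((ℤ × ℤ) × (ZMod 2 × ZMod 2)) :=
    Abelianization.lift Φ with hΦA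
  have hkey : ∀ (g : Fsanov) (n : Multiplicative (Lq q)),
      Abelianization.of (SemidirectProduct.inl (φ g n * n⁻¹) : LqRtimesF2 q) = 1 := by
    intro g n
    have h1 : (SemidirectProduct.inl (φ g n * n⁻¹) : LqRtimesF2 q)
        = SemidirectProduct.inl (φ g n) * (SemidirectProduct.inl n)⁻¹ := by
      rw [_root_.map_mul, _root_.map_inv]
    rw [h1, SemidirectProduct.inl_aut g n, _root_.map_mul, _root_.map_mul, _root_.map_mul]
    have h2 : (Abelianization.of (SemidirectProduct.inr g⁻¹ : LqRtimesF2 q))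
        = (Abelianization.of (SemidirectProduct.inr g : LqRtimesF2 q))⁻¹ := by
      rw [_root_.map_inv, _root_.map_inv]
    rw [h2, _root_.map_inv,
      mul_comm (Abelianization.of (SemidirectProduct.inr g : LqRtimesF2 q))
        (Abelianization.of (SemidirectProduct.inl n : LqRtimesF2 q))]
    group
  have harg1 : φ uel (Multiplicative.ofAdd e2) * (Multiplicative.ofAdd e2)⁻¹
      = Multiplicative.ofAdd (e1 + e1) := by
    apply Multiplicative.toAdd.injective
    rw [toAdd_mul, toAdd_inv, toAdd_ofAdd, toAdd_ofAdd, hφapply, toAdd_ofAdd]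
    apply Subtype.ext
    show (Umat : Matrix (Fin 2) (Fin 2) ℤ).mulVec (e2 : Fin 2 → ℤ) + -(e2 : Fin 2 → ℤ)
        = (e1 : Fin 2 → ℤ) + (e1 : Fin 2 → ℤ)
    funext i
    fin_cases i <;>
      simp [he1, he2, Umat, Matrix.mulVec, dotProduct, Fin.sum_univ_two] <;> try ring
  have harg2 : φ vel (Multiplicative.ofAdd e1) * (Multiplicative.ofAdd e1)⁻¹
      = Multiplicative.ofAdd (e2 + e2) := by
    apply Multiplicative.toAdd.injective
    rw [toAdd_mul, toAdd_inv, toAdd_ofAdd, toAdd_ofAdd, hφapply, toAdd_ofAdd]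
    apply Subtype.ext
    show (Vmat : Matrix (Fin 2) (Fin 2) ℤ).mulVec (e1 : Fin 2 → ℤ) + -(e1 : Fin 2 → ℤ)
        = (e2 : Fin 2 → ℤ) + (e2 : Fin 2 → ℤ)
    funext i
    fin_cases i <;>
      simp [he1, he2, Vmat, Matrix.mulVec, dotProduct, Fin.sum_univ_two] <;> try ring
  have hrel1 : Abelianization.of (SemidirectProduct.inl (Multiplicative.ofAdd e1) : LqRtimesF2 q)
      * Abelianization.of (SemidirectProduct.inl (Multiplicative.ofAdd e1) : LqRtimesF2 q) = 1 := by
    have h := hkey uel (Multiplicative.ofAdd e2)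
    rw [harg1] at h
    rw [ofAdd_add, _root_.map_mul, _root_.map_mul] at h
    exact h
  have hrel2 : Abelianization.of (SemidirectProduct.inl (Multiplicative.ofAdd e2) : LqRtimesF2 q)
      * Abelianization.of (SemidirectProduct.inl (Multiplicative.ofAdd e2) : LqRtimesF2 q) = 1 := by
    have h := hkey vel (Multiplicative.ofAdd e1)
    rw [harg2] at h
    rw [ofAdd_add, _root_.map_mul, _root_.map_mul] at h
    exact h
  set xu : (Additive (Abelianization (LqRtimesF2 q))) :=
    Additive.ofMul (Abelianization.of (SemidirectProduct.inr uel : LqRtimesF2 q)) with hxu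
  set xv : (Additive (Abelianization (LqRtimesF2 q))) :=
    Additive.ofMul (Abelianization.of (SemidirectProduct.inr vel : LqRtimesF2 q)) with hxv
  set x1 : (Additive (Abelianization (LqRtimesF2 q))) :=
    Additive.ofMul
      (Abelianization.of (SemidirectProduct.inl (Multiplicative.ofAdd e1) : LqRtimesF2 q)) with hx1def
  set x2 : (Additive (Abelianization (LqRtimesF2 q))) :=
    Additive.ofMul
      (Abelianization.of (SemidirectProduct.inl (Multiplicative.ofAdd e2) : LqRtimesF2 q)) with hx2def
  have hx1 : zmultiplesHom (Additive (Abelianization (LqRtimesF2 q))) x1 (2 : ℤ) = 0 := by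
    show (2 : ℤ) • x1 = 0
    rw [two_zsmul]
    apply Additive.toMul.injective
    exact hrel1
  have hx2 : zmultiplesHom (Additive (Abelianization (LqRtimesF2 q))) x2 (2 : ℤ) = 0 := by
    show (2 : ℤ) • x2 = 0
    rw [two_zsmul]
    apply Additive.toMul.injective
    exact hrel2
  set c1 : ℤ →+ (Additive (Abelianization (LqRtimesF2 q))) := zmultiplesHom (Additive (Abelianization (LqRtimesF2 q))) xu with hc1
  set c2 : ℤ →+ (Additive (Abelianization (LqRtimesF2 q))) := zmultiplesHom (Additive (Abelianization (LqRtimesF2 q))) xv with hc2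
  set c3 : ZMod 2 →+ (Additive (Abelianization (LqRtimesF2 q))) := ZMod.lift 2 ⟨zmultiplesHom (Additive (Abelianization (LqRtimesF2 q))) x1, hx1⟩ with hc3
  set c4 : ZMod 2 →+ (Additive (Abelianization (LqRtimesF2 q))) := ZMod.lift 2 ⟨zmultiplesHom (Additive (Abelianization (LqRtimesF2 q))) x2, hx2⟩ with hc4
  set c12 : ℤ × ℤ →+ (Additive (Abelianization (LqRtimesF2 q))) := AddMonoidHom.coprod c1 c2 with hc12
  set c34 : ZMod 2 × ZMod 2 →+ (Additive (Abelianization (LqRtimesF2 q))) := AddMonoidHom.coprod c3 c4 with hc34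
  set Hsum : ((ℤ × ℤ) × (ZMod 2 × ZMod 2)) →+ (Additive (Abelianization (LqRtimesF2 q))) := AddMonoidHom.coprod c12 c34 with hHsum
  set Ψ : Multiplicative ((ℤ × ℤ) × (ZMod 2 × ZMod 2)) →* Abelianization (LqRtimesF2 q) :=
    AddMonoidHom.toMultiplicativeLeft Hsum with hΨ
  have hΨapply : ∀ p : (ℤ × ℤ) × (ZMod 2 × ZMod 2),
      Ψ (Multiplicative.ofAdd p)
        = Additive.toMul ((c1 p.1.1 + c2 p.1.2) + (c3 p.2.1 + c4 p.2.2)) := fun p => rfl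
  have hΨu : Ψ (Multiplicative.ofAdd (((1, 0) : ℤ × ℤ), ((0, 0) : ZMod 2 × ZMod 2)))
      = Abelianization.of (SemidirectProduct.inr uel : LqRtimesF2 q) := by
    rw [hΨapply]
    simp only [hc1, hc2, hc3, hc4, zmultiplesHom_apply, one_zsmul, map_zero, add_zero, zero_add]
    rfl
  have hΨv : Ψ (Multiplicative.ofAdd (((0, 1) : ℤ × ℤ), ((0, 0) : ZMod 2 × ZMod 2)))
      = Abelianization.of (SemidirectProduct.inr vel : LqRtimesF2 q) := by
    rw [hΨapply]
    simp only [hc1, hc2, hc3, hc4, zmultiplesHom_apply, one_zsmul, map_zero, add_zero, zero_add,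
      zero_zsmul]
    rfl
  have hΨ1 : Ψ (Multiplicative.ofAdd (((0, 0) : ℤ × ℤ), ((1, 0) : ZMod 2 × ZMod 2)))
      = Abelianization.of (SemidirectProduct.inl (Multiplicative.ofAdd e1) : LqRtimesF2 q) := by
    rw [hΨapply]
    have h1 : ((1 : ZMod 2)) = ((1 : ℤ) : ZMod 2) := by norm_num
    simp only [hc1, hc2, hc3, hc4, zmultiplesHom_apply, map_zero, add_zero, zero_add, zero_zsmul]
    rw [h1, ZMod.lift_coe]
    show Additive.toMul ((1:ℤ) • x1) = _
    rw [one_zsmul]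
    rfl
  have hΨ2 : Ψ (Multiplicative.ofAdd (((0, 0) : ℤ × ℤ), ((0, 1) : ZMod 2 × ZMod 2)))
      = Abelianization.of (SemidirectProduct.inl (Multiplicative.ofAdd e2) : LqRtimesF2 q) := by
    rw [hΨapply]
    have h1 : ((1 : ZMod 2)) = ((1 : ℤ) : ZMod 2) := by norm_num
    simp only [hc1, hc2, hc3, hc4, zmultiplesHom_apply, map_zero, add_zero, zero_add, zero_zsmul]
    rw [h1, ZMod.lift_coe]
    show Additive.toMul ((1:ℤ) • x2) = _
    rw [one_zsmul]
    rfl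
  have hΦu : ΦA (Abelianization.of (SemidirectProduct.inr uel : LqRtimesF2 q))
      = Multiplicative.ofAdd (((1, 0) : ℤ × ℤ), ((0, 0) : ZMod 2 × ZMod 2)) := by
    rw [hΦA, Abelianization.lift_apply_of, hΦ, SemidirectProduct.lift_inr, hf₂]
    simp only [MonoidHom.comp_apply, hπU]
    rfl
  have hΦv : ΦA (Abelianization.of (SemidirectProduct.inr vel : LqRtimesF2 q))
      = Multiplicative.ofAdd (((0, 1) : ℤ × ℤ), ((0, 0) : ZMod 2 × ZMod 2)) := by
    rw [hΦA, Abelianization.lift_apply_of, hΦ, SemidirectProduct.lift_inr, hf₂]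
    simp only [MonoidHom.comp_apply, hπV]
    rfl
  have hnu1 : nuHom q e1 = (((1 : ZMod 2), (0 : ZMod 2))) := by
    show ((((e1 : Fin 2 → ℤ) 0 / q : ℤ) : ZMod 2), (((e1 : Fin 2 → ℤ) 1 / q : ℤ) : ZMod 2)) = _
    rw [he1]
    show (((q / q : ℤ) : ZMod 2), (((0 : ℤ) / q : ℤ) : ZMod 2)) = _
    rw [Int.ediv_self hqne]
    norm_num
  have hnu2 : nuHom q e2 = (((0 : ZMod 2), (1 : ZMod 2))) := by
    show ((((e2 : Fin 2 → ℤ) 0 / q : ℤ) : ZMod 2), (((e2 : Fin 2 → ℤ) 1 / q : ℤ) : ZMod 2)) = _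
    rw [he2]
    show ((((0 : ℤ) / q : ℤ) : ZMod 2), ((q / q : ℤ) : ZMod 2)) = _
    rw [Int.ediv_self hqne]
    norm_num
  have hΦ1 : ΦA (Abelianization.of (SemidirectProduct.inl (Multiplicative.ofAdd e1) : LqRtimesF2 q))
      = Multiplicative.ofAdd (((0, 0) : ℤ × ℤ), ((1, 0) : ZMod 2 × ZMod 2)) := by
    rw [hΦA, Abelianization.lift_apply_of, hΦ, SemidirectProduct.lift_inl, hf₁apply, hnu1]
  have hΦ2 : ΦA (Abelianization.of (SemidirectProduct.inl (Multiplicative.ofAdd e2) : LqRtimesF2 q))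
      = Multiplicative.ofAdd (((0, 0) : ℤ × ℤ), ((0, 1) : ZMod 2 × ZMod 2)) := by
    rw [hΦA, Abelianization.lift_apply_of, hΦ, SemidirectProduct.lift_inl, hf₁apply, hnu2]
  have hleft : Ψ.comp ΦA = MonoidHom.id (Abelianization (LqRtimesF2 q)) := by
    apply Abelianization.hom_ext
    apply SemidirectProduct.hom_ext
    · refine MonoidHom.ext fun n => ?_
      set a : ℤ := ((Multiplicative.toAdd n : Lq q) : Fin 2 → ℤ) 0 / q with ha
      set b : ℤ := ((Multiplicative.toAdd n : Lq q) : Fin 2 → ℤ) 1 / q with hb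
      have hdec : n = (Multiplicative.ofAdd e1) ^ a * (Multiplicative.ofAdd e2) ^ b := by
        apply Multiplicative.toAdd.injective
        rw [toAdd_mul, toAdd_zpow, toAdd_zpow, toAdd_ofAdd, toAdd_ofAdd]
        apply Subtype.ext
        show ((Multiplicative.toAdd n : Lq q) : Fin 2 → ℤ)
            = a • (e1 : Fin 2 → ℤ) + b • (e2 : Fin 2 → ℤ)
        funext i
        fin_cases i
        · show ((Multiplicative.toAdd n : Lq q) : Fin 2 → ℤ) 0
              = a • (e1 : Fin 2 → ℤ) 0 + b • (e2 : Fin 2 → ℤ) 0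
          rw [he1, he2]
          show _ = a • q + b • (0:ℤ)
          rw [smul_eq_mul, smul_eq_mul, mul_zero, add_zero, ha,
            Int.ediv_mul_cancel ((Multiplicative.toAdd n : Lq q).2 0)]
        · show ((Multiplicative.toAdd n : Lq q) : Fin 2 → ℤ) 1
              = a • (e1 : Fin 2 → ℤ) 1 + b • (e2 : Fin 2 → ℤ) 1
          rw [he1, he2]
          show _ = a • (0:ℤ) + b • q
          rw [smul_eq_mul, smul_eq_mul, mul_zero, zero_add, hb,
            Int.ediv_mul_cancel ((Multiplicative.toAdd n : Lq q).2 1)]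
      simp only [MonoidHom.comp_apply, MonoidHom.id_apply]
      rw [hdec]
      simp only [_root_.map_mul, _root_.map_zpow]
      rw [hΦ1, hΦ2, hΨ1, hΨ2]
    · apply Fsanov_hom_ext
      · simp only [MonoidHom.comp_apply, MonoidHom.id_apply]
        rw [← huel, hΦu, hΨu]
      · simp only [MonoidHom.comp_apply, MonoidHom.id_apply]
        rw [← hvel, hΦv, hΨv]
  have hright : ΦA.comp Ψ = MonoidHom.id (Multiplicative ((ℤ × ℤ) × (ZMod 2 × ZMod 2))) := by
    refine MonoidHom.ext fun t => ?_
    obtain ⟨⟨m, k⟩, a, b⟩ := t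
    show ΦA (Ψ (Multiplicative.ofAdd ((m, k), (a, b)))) = Multiplicative.ofAdd ((m, k), (a, b))
    rw [hΨapply]
    show ΦA (Additive.toMul ((c1 m + c2 k) + (c3 a + c4 b)))
        = Multiplicative.ofAdd ((m, k), (a, b))
    have haa : a = ((ZMod.cast a : ℤ) : ZMod 2) := (ZMod.intCast_zmod_cast a).symm
    have hbb : b = ((ZMod.cast b : ℤ) : ZMod 2) := (ZMod.intCast_zmod_cast b).symm
    rw [haa, hbb]
    simp only [hc1, hc2, hc3, hc4, zmultiplesHom_apply, ZMod.lift_coe]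
    show ΦA (Additive.toMul ((m • xu + k • xv) + ((ZMod.cast a : ℤ) • x1 + (ZMod.cast b : ℤ) • x2)))
        = _
    rw [toMul_add, toMul_add, toMul_add, toMul_zsmul, toMul_zsmul, toMul_zsmul, toMul_zsmul,
      _root_.map_mul, _root_.map_mul, _root_.map_mul, _root_.map_zpow, _root_.map_zpow,
      _root_.map_zpow, _root_.map_zpow]
    rw [hxu, hxv, hx1def, hx2def]
    show (ΦA (Abelianization.of (SemidirectProduct.inr uel : LqRtimesF2 q))) ^ m
        * (ΦA (Abelianization.of (SemidirectProduct.inr vel : LqRtimesF2 q))) ^ k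
        * ((ΦA (Abelianization.of (SemidirectProduct.inl (Multiplicative.ofAdd e1) : LqRtimesF2 q))) ^ (ZMod.cast a : ℤ)
          * (ΦA (Abelianization.of (SemidirectProduct.inl (Multiplicative.ofAdd e2) : LqRtimesF2 q))) ^ (ZMod.cast b : ℤ))
        = _
    rw [hΦu, hΦv, hΦ1, hΦ2, ← ofAdd_zsmul, ← ofAdd_zsmul, ← ofAdd_zsmul, ← ofAdd_zsmul,
      ← ofAdd_add, ← ofAdd_add, ← ofAdd_add]
    apply congrArg Multiplicative.ofAdd
    rw [Prod.ext_iff]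
    constructor
    · simp [Prod.smul_mk, Prod.mk_add_mk, Prod.mk.injEq, smul_eq_mul]
    · simp [Prod.smul_mk, Prod.mk_add_mk, Prod.mk.injEq, zsmul_eq_mul]
  exact ⟨MonoidHom.toMulEquiv ΦA Ψ hleft hright⟩
end

section
/- For each integer q ≥ 2, the subgroup H_q = ⟨qℤ², (0,U), (0,V)⟩ of ℤ² ⋊ SL(2,ℤ) (with U, V the Sanov matrices) has rank exactly 4. -/
/-- The standard linear action of `SL(2,ℤ)` on `ℤ²` (written multiplicatively). -/
def rho : SL2 →* MulAut (Multiplicative (Fin 2 → ℤ)) where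
  toFun A := AddEquiv.toMultiplicative (Matrix.SpecialLinearGroup.toLin' A).toAddEquiv
  map_one' := by ext v; simp
  map_mul' A B := by ext v; simp

/-- The semidirect product `ℤ² ⋊ SL(2,ℤ)` with the standard linear action. -/
abbrev Z2RtimesSL2 := Multiplicative (Fin 2 → ℤ) ⋊[rho] SL2

/-- The subgroup `H_q = ⟨qℤ², (0,U), (0,V)⟩` of `ℤ² ⋊ SL(2,ℤ)`. -/
def Hq (q : ℤ) : Subgroup Z2RtimesSL2 :=
  Subgroup.closure
    ((SemidirectProduct.inl ''
        {v : Multiplicative (Fin 2 → ℤ) | ∀ i, q ∣ Multiplicative.toAdd v i}) ∪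
      {SemidirectProduct.inr Umat, SemidirectProduct.inr Vmat})

lemma rho_apply (A : SL2) (w : Multiplicative (Fin 2 → ℤ)) (i : Fin 2) :
    Multiplicative.toAdd (rho A w) i =
      (A : Matrix (Fin 2) (Fin 2) ℤ) i 0 * Multiplicative.toAdd w 0 +
      (A : Matrix (Fin 2) (Fin 2) ℤ) i 1 * Multiplicative.toAdd w 1 := by
  show (Matrix.SpecialLinearGroup.toLin' A) (Multiplicative.toAdd w) i = _
  simp [Matrix.SpecialLinearGroup.toLin'_apply, Matrix.toLin'_apply, Matrix.mulVec,
    dotProduct, Fin.sum_univ_two]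

lemma coe_mul_entry (A B : SL2) (i j : Fin 2) :
    (↑(A * B) : Matrix (Fin 2) (Fin 2) ℤ) i j =
      (A : Matrix (Fin 2) (Fin 2) ℤ) i 0 * (B : Matrix (Fin 2) (Fin 2) ℤ) 0 j +
      (A : Matrix (Fin 2) (Fin 2) ℤ) i 1 * (B : Matrix (Fin 2) (Fin 2) ℤ) 1 j := by
  simp [Matrix.SpecialLinearGroup.coe_mul, Matrix.mul_apply, Fin.sum_univ_two]

def Kq (q : ℤ) : Subgroup Z2RtimesSL2 where
  carrier := {x | (∀ i, q ∣ Multiplicative.toAdd x.left i) ∧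
    2 ∣ (x.right : Matrix (Fin 2) (Fin 2) ℤ) 0 0 - 1 ∧
    2 ∣ (x.right : Matrix (Fin 2) (Fin 2) ℤ) 0 1 ∧
    2 ∣ (x.right : Matrix (Fin 2) (Fin 2) ℤ) 1 0 ∧
    2 ∣ (x.right : Matrix (Fin 2) (Fin 2) ℤ) 1 1 - 1}
  one_mem' := by
    refine ⟨fun i => ⟨0, by simp⟩, ?_, ?_, ?_, ?_⟩ <;>
      simp [SemidirectProduct.one_right]
  mul_mem' := by
    rintro x y ⟨hv, a00, a01, a10, a11⟩ ⟨hw, b00, b01, b10, b11⟩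
    refine ⟨fun i => ?_, ?_, ?_, ?_, ?_⟩
    · rw [SemidirectProduct.mul_left, toAdd_mul, Pi.add_apply, rho_apply]
      exact dvd_add (hv i) (dvd_add ((hw 0).mul_left _) ((hw 1).mul_left _))
    all_goals rw [SemidirectProduct.mul_right, coe_mul_entry]
    · obtain ⟨a, ha⟩ := a00; obtain ⟨b, hb⟩ := b00; obtain ⟨c, hc⟩ := a01; obtain ⟨d, hd⟩ := b10
      have ha' : (x.right : Matrix (Fin 2) (Fin 2) ℤ) 0 0 = 2*a+1 := by omega
      have hb' : (y.right : Matrix (Fin 2) (Fin 2) ℤ) 0 0 = 2*b+1 := by omega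
      rw [ha', hb', hc, hd]; exact ⟨2*a*b+a+b+2*c*d, by ring⟩
    · obtain ⟨a, ha⟩ := a00; obtain ⟨b, hb⟩ := b01; obtain ⟨c, hc⟩ := a01; obtain ⟨d, hd⟩ := b11
      have ha' : (x.right : Matrix (Fin 2) (Fin 2) ℤ) 0 0 = 2*a+1 := by omega
      have hd' : (y.right : Matrix (Fin 2) (Fin 2) ℤ) 1 1 = 2*d+1 := by omega
      rw [ha', hd', hb, hc]; exact ⟨b+2*a*b+c+2*c*d, by ring⟩
    · obtain ⟨a, ha⟩ := a10; obtain ⟨b, hb⟩ := b00; obtain ⟨c, hc⟩ := a11; obtain ⟨d, hd⟩ := b10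
      have hb' : (y.right : Matrix (Fin 2) (Fin 2) ℤ) 0 0 = 2*b+1 := by omega
      have hc' : (x.right : Matrix (Fin 2) (Fin 2) ℤ) 1 1 = 2*c+1 := by omega
      rw [hb', hc', ha, hd]; exact ⟨a+2*a*b+d+2*c*d, by ring⟩
    · obtain ⟨a, ha⟩ := a10; obtain ⟨b, hb⟩ := b01; obtain ⟨c, hc⟩ := a11; obtain ⟨d, hd⟩ := b11
      have hc' : (x.right : Matrix (Fin 2) (Fin 2) ℤ) 1 1 = 2*c+1 := by omega
      have hd' : (y.right : Matrix (Fin 2) (Fin 2) ℤ) 1 1 = 2*d+1 := by omega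
      rw [hc', hd', ha, hb]; exact ⟨2*a*b+2*c*d+c+d, by ring⟩
  inv_mem' := by
    rintro x ⟨hv, a00, a01, a10, a11⟩
    have hadj : ∀ i j, (↑(x.right⁻¹) : Matrix (Fin 2) (Fin 2) ℤ) i j =
        (!![(x.right : Matrix (Fin 2) (Fin 2) ℤ) 1 1, -(x.right : Matrix (Fin 2) (Fin 2) ℤ) 0 1;
           -(x.right : Matrix (Fin 2) (Fin 2) ℤ) 1 0, (x.right : Matrix (Fin 2) (Fin 2) ℤ) 0 0]) i j := by
      intro i j
      rw [Matrix.SpecialLinearGroup.coe_inv, Matrix.adjugate_fin_two]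
    refine ⟨fun i => ?_, ?_, ?_, ?_, ?_⟩
    · rw [SemidirectProduct.inv_left, rho_apply]
      refine dvd_add (Dvd.dvd.mul_left ?_ _) (Dvd.dvd.mul_left ?_ _) <;>
        · rw [toAdd_inv, Pi.neg_apply]; exact (hv _).neg_right
    all_goals rw [SemidirectProduct.inv_right, hadj]
    · simpa using a11
    · simpa using a01.neg_right
    · simpa using a10.neg_right
    · simpa using a00

lemma zmod2_cast_eq {m n : ℤ} (h : 2 ∣ m - n) : ((m : ZMod 2) : ZMod 2) = (n : ℤ) := by
  obtain ⟨k, hk⟩ := h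
  have : m = n + 2 * k := by omega
  rw [this]; push_cast
  have h2 : ((2 : ZMod 2)) = 0 := rfl
  rw [h2, zero_mul, add_zero]

lemma cons_congr {n : ℕ} {a b : ZMod 2} {u v : Fin n → ZMod 2} (h1 : a = b) (h2 : u = v) :
    Matrix.vecCons a u = Matrix.vecCons b v := by rw [h1, h2]

def F (q : ℤ) (hq : q ≠ 0) : ↥(Kq q) →* Multiplicative (Fin 4 → ZMod 2) :=
  MonoidHom.mk' (fun x => Multiplicative.ofAdd
    ![((Multiplicative.toAdd (x : Z2RtimesSL2).left 0 / q : ℤ) : ZMod 2),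
      ((Multiplicative.toAdd (x : Z2RtimesSL2).left 1 / q : ℤ) : ZMod 2),
      ((((x : Z2RtimesSL2).right : Matrix (Fin 2) (Fin 2) ℤ) 0 1 / 2 : ℤ) : ZMod 2),
      ((((x : Z2RtimesSL2).right : Matrix (Fin 2) (Fin 2) ℤ) 1 0 / 2 : ℤ) : ZMod 2)]) (by
    intro x y
    obtain ⟨hv, a00, a01, a10, a11⟩ := x.2
    obtain ⟨hw, b00, b01, b10, b11⟩ := y.2
    obtain ⟨v0, hv0⟩ := hv 0; obtain ⟨v1, hv1⟩ := hv 1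
    obtain ⟨w0, hw0⟩ := hw 0; obtain ⟨w1, hw1⟩ := hw 1
    obtain ⟨a, ha⟩ := a00; obtain ⟨b, hb⟩ := a01; obtain ⟨c, hc⟩ := a10; obtain ⟨d, hd⟩ := a11
    obtain ⟨a', ha'⟩ := b00; obtain ⟨b', hb'⟩ := b01; obtain ⟨c', hc'⟩ := b10; obtain ⟨d', hd'⟩ := b11
    have hA00 : ((x : Z2RtimesSL2).right : Matrix (Fin 2) (Fin 2) ℤ) 0 0 = 2*a+1 := by omega
    have hA11 : ((x : Z2RtimesSL2).right : Matrix (Fin 2) (Fin 2) ℤ) 1 1 = 2*d+1 := by omega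
    have hB00 : ((y : Z2RtimesSL2).right : Matrix (Fin 2) (Fin 2) ℤ) 0 0 = 2*a'+1 := by omega
    have hB11 : ((y : Z2RtimesSL2).right : Matrix (Fin 2) (Fin 2) ℤ) 1 1 = 2*d'+1 := by omega
    have hcoe : ((x * y : ↥(Kq q)) : Z2RtimesSL2) = (x : Z2RtimesSL2) * (y : Z2RtimesSL2) := rfl
    rw [← ofAdd_add]
    refine congrArg _ ?_
    simp only [hcoe, SemidirectProduct.mul_left, SemidirectProduct.mul_right, toAdd_mul,
      Pi.add_apply, rho_apply, coe_mul_entry, Matrix.cons_add_cons, Matrix.empty_add_empty]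
    refine cons_congr ?_ (cons_congr ?_ (cons_congr ?_ (cons_congr ?_ rfl)))
    · rw [hv0, hw0, hw1, hA00, hb,
        show q*v0 + ((2*a+1)*(q*w0) + 2*b*(q*w1)) = q * (v0 + (2*a+1)*w0 + 2*b*w1) by ring,
        Int.mul_ediv_cancel_left _ hq, Int.mul_ediv_cancel_left _ hq, Int.mul_ediv_cancel_left _ hq]
      rw [← Int.cast_add]
      exact zmod2_cast_eq ⟨a*w0 + b*w1, by ring⟩
    · rw [hv1, hw0, hw1, hA11, hc,
        show q*v1 + (2*c*(q*w0) + (2*d+1)*(q*w1)) = q * (v1 + 2*c*w0 + (2*d+1)*w1) by ring,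
        Int.mul_ediv_cancel_left _ hq, Int.mul_ediv_cancel_left _ hq, Int.mul_ediv_cancel_left _ hq]
      rw [← Int.cast_add]
      exact zmod2_cast_eq ⟨c*w0 + d*w1, by ring⟩
    · rw [hA00, hb, hb', hB11,
        show (2*a+1)*(2*b') + 2*b*(2*d'+1) = 2 * (2*a*b' + b' + b + 2*b*d') by ring,
        Int.mul_ediv_cancel_left _ (by norm_num : (2:ℤ) ≠ 0),
        Int.mul_ediv_cancel_left _ (by norm_num : (2:ℤ) ≠ 0),
        Int.mul_ediv_cancel_left _ (by norm_num : (2:ℤ) ≠ 0)]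
      rw [← Int.cast_add]
      exact zmod2_cast_eq ⟨a*b' + b*d', by ring⟩
    · rw [hc, hc', hA11, hB00,
        show 2*c*(2*a'+1) + (2*d+1)*(2*c') = 2 * (2*c*a' + c + c' + 2*d*c') by ring,
        Int.mul_ediv_cancel_left _ (by norm_num : (2:ℤ) ≠ 0),
        Int.mul_ediv_cancel_left _ (by norm_num : (2:ℤ) ≠ 0),
        Int.mul_ediv_cancel_left _ (by norm_num : (2:ℤ) ≠ 0)]
      rw [← Int.cast_add]
      exact zmod2_cast_eq ⟨c*a' + d*c', by ring⟩)

lemma Umat_coe : (Umat : Matrix (Fin 2) (Fin 2) ℤ) = !![1, 2; 0, 1] := rfl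
lemma Vmat_coe : (Vmat : Matrix (Fin 2) (Fin 2) ℤ) = !![1, 0; 2, 1] := rfl

lemma Hq_le_Kq (q : ℤ) : Hq q ≤ Kq q := by
  rw [Hq]
  refine (Subgroup.closure_le _).mpr ?_
  rintro x (⟨v, hv, rfl⟩ | hx)
  · refine ⟨fun i => by simpa [SemidirectProduct.left_inl] using hv i, ?_, ?_, ?_, ?_⟩ <;>
      simp [SemidirectProduct.right_inl, Matrix.SpecialLinearGroup.coe_one, Matrix.one_apply]
  · rcases hx with rfl | rfl <;>
      refine ⟨fun i => by simp [SemidirectProduct.left_inr], ?_, ?_, ?_, ?_⟩ <;>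
        norm_num [SemidirectProduct.right_inr, Umat_coe, Vmat_coe]

def gen1 (q : ℤ) : Z2RtimesSL2 := SemidirectProduct.inl (Multiplicative.ofAdd (Pi.single 0 q))
def gen2 (q : ℤ) : Z2RtimesSL2 := SemidirectProduct.inl (Multiplicative.ofAdd (Pi.single 1 q))
def gen3 : Z2RtimesSL2 := SemidirectProduct.inr Umat
def gen4 : Z2RtimesSL2 := SemidirectProduct.inr Vmat

lemma gen1_mem (q : ℤ) : gen1 q ∈ Hq q :=
  Subgroup.subset_closure (Or.inl ⟨_, fun i => by
    fin_cases i <;> simp [Pi.single_apply], rfl⟩)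

lemma gen2_mem (q : ℤ) : gen2 q ∈ Hq q :=
  Subgroup.subset_closure (Or.inl ⟨_, fun i => by
    fin_cases i <;> simp [Pi.single_apply], rfl⟩)

lemma gen3_mem (q : ℤ) : gen3 ∈ Hq q := Subgroup.subset_closure (Or.inr (by simp [gen3]))
lemma gen4_mem (q : ℤ) : gen4 ∈ Hq q := Subgroup.subset_closure (Or.inr (by simp [gen4]))

lemma F_gen1 (q : ℤ) (hq0 : q ≠ 0) (x : ↥(Kq q)) (hx : (x : Z2RtimesSL2) = gen1 q) :
    Multiplicative.toAdd (F q hq0 x) = ![1, 0, 0, 0] := by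
  show ![((Multiplicative.toAdd (x : Z2RtimesSL2).left 0 / q : ℤ) : ZMod 2),
        ((Multiplicative.toAdd (x : Z2RtimesSL2).left 1 / q : ℤ) : ZMod 2),
        ((((x : Z2RtimesSL2).right : Matrix (Fin 2) (Fin 2) ℤ) 0 1 / 2 : ℤ) : ZMod 2),
        ((((x : Z2RtimesSL2).right : Matrix (Fin 2) (Fin 2) ℤ) 1 0 / 2 : ℤ) : ZMod 2)] = _
  rw [hx, gen1]
  refine cons_congr ?_ (cons_congr ?_ (cons_congr ?_ (cons_congr ?_ rfl)))
  · rw [SemidirectProduct.left_inl, toAdd_ofAdd, Pi.single_eq_same, Int.ediv_self hq0]; norm_num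
  · rw [SemidirectProduct.left_inl, toAdd_ofAdd, Pi.single_eq_of_ne (by decide), Int.zero_ediv]
    norm_num
  · rw [SemidirectProduct.right_inl, Matrix.SpecialLinearGroup.coe_one,
      Matrix.one_apply_ne (by decide), Int.zero_ediv]; norm_num
  · rw [SemidirectProduct.right_inl, Matrix.SpecialLinearGroup.coe_one,
      Matrix.one_apply_ne (by decide), Int.zero_ediv]; norm_num

lemma F_gen2 (q : ℤ) (hq0 : q ≠ 0) (x : ↥(Kq q)) (hx : (x : Z2RtimesSL2) = gen2 q) :
    Multiplicative.toAdd (F q hq0 x) = ![0, 1, 0, 0] := by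
  show ![((Multiplicative.toAdd (x : Z2RtimesSL2).left 0 / q : ℤ) : ZMod 2),
        ((Multiplicative.toAdd (x : Z2RtimesSL2).left 1 / q : ℤ) : ZMod 2),
        ((((x : Z2RtimesSL2).right : Matrix (Fin 2) (Fin 2) ℤ) 0 1 / 2 : ℤ) : ZMod 2),
        ((((x : Z2RtimesSL2).right : Matrix (Fin 2) (Fin 2) ℤ) 1 0 / 2 : ℤ) : ZMod 2)] = _
  rw [hx, gen2]
  refine cons_congr ?_ (cons_congr ?_ (cons_congr ?_ (cons_congr ?_ rfl)))
  · rw [SemidirectProduct.left_inl, toAdd_ofAdd, Pi.single_eq_of_ne (by decide), Int.zero_ediv]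
    norm_num
  · rw [SemidirectProduct.left_inl, toAdd_ofAdd, Pi.single_eq_same, Int.ediv_self hq0]; norm_num
  · rw [SemidirectProduct.right_inl, Matrix.SpecialLinearGroup.coe_one,
      Matrix.one_apply_ne (by decide), Int.zero_ediv]; norm_num
  · rw [SemidirectProduct.right_inl, Matrix.SpecialLinearGroup.coe_one,
      Matrix.one_apply_ne (by decide), Int.zero_ediv]; norm_num

lemma F_gen3 (q : ℤ) (hq0 : q ≠ 0) (x : ↥(Kq q)) (hx : (x : Z2RtimesSL2) = gen3) :
    Multiplicative.toAdd (F q hq0 x) = ![0, 0, 1, 0] := by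
  show ![((Multiplicative.toAdd (x : Z2RtimesSL2).left 0 / q : ℤ) : ZMod 2),
        ((Multiplicative.toAdd (x : Z2RtimesSL2).left 1 / q : ℤ) : ZMod 2),
        ((((x : Z2RtimesSL2).right : Matrix (Fin 2) (Fin 2) ℤ) 0 1 / 2 : ℤ) : ZMod 2),
        ((((x : Z2RtimesSL2).right : Matrix (Fin 2) (Fin 2) ℤ) 1 0 / 2 : ℤ) : ZMod 2)] = _
  rw [hx, gen3]
  refine cons_congr ?_ (cons_congr ?_ (cons_congr ?_ (cons_congr ?_ rfl)))
  · rw [SemidirectProduct.left_inr]; norm_num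
  · rw [SemidirectProduct.left_inr]; norm_num
  · rw [SemidirectProduct.right_inr, Umat_coe]; norm_num
  · rw [SemidirectProduct.right_inr, Umat_coe]; norm_num

lemma F_gen4 (q : ℤ) (hq0 : q ≠ 0) (x : ↥(Kq q)) (hx : (x : Z2RtimesSL2) = gen4) :
    Multiplicative.toAdd (F q hq0 x) = ![0, 0, 0, 1] := by
  show ![((Multiplicative.toAdd (x : Z2RtimesSL2).left 0 / q : ℤ) : ZMod 2),
        ((Multiplicative.toAdd (x : Z2RtimesSL2).left 1 / q : ℤ) : ZMod 2),
        ((((x : Z2RtimesSL2).right : Matrix (Fin 2) (Fin 2) ℤ) 0 1 / 2 : ℤ) : ZMod 2),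
        ((((x : Z2RtimesSL2).right : Matrix (Fin 2) (Fin 2) ℤ) 1 0 / 2 : ℤ) : ZMod 2)] = _
  rw [hx, gen4]
  refine cons_congr ?_ (cons_congr ?_ (cons_congr ?_ (cons_congr ?_ rfl)))
  · rw [SemidirectProduct.left_inr]; norm_num
  · rw [SemidirectProduct.left_inr]; norm_num
  · rw [SemidirectProduct.right_inr, Vmat_coe]; norm_num
  · rw [SemidirectProduct.right_inr, Vmat_coe]; norm_num

lemma gens_distinct (q : ℤ) (hq : 2 ≤ q) :
    gen1 q ≠ gen2 q ∧ gen1 q ≠ gen3 ∧ gen1 q ≠ gen4 ∧ gen2 q ≠ gen3 ∧ gen2 q ≠ gen4 ∧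
      gen3 ≠ gen4 := by
  refine ⟨fun h => ?_, fun h => ?_, fun h => ?_, fun h => ?_, fun h => ?_, fun h => ?_⟩
  · have := congrArg (fun z : Z2RtimesSL2 => Multiplicative.toAdd z.left 0) h
    simp [gen1, gen2, SemidirectProduct.left_inl, Pi.single_apply] at this
    omega
  · have := congrArg (fun z : Z2RtimesSL2 => (z.right : Matrix (Fin 2) (Fin 2) ℤ) 0 1) h
    simp [gen1, gen3, SemidirectProduct.right_inl, SemidirectProduct.right_inr,
      Matrix.SpecialLinearGroup.coe_one, Matrix.one_apply, Umat_coe] at this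
  · have := congrArg (fun z : Z2RtimesSL2 => (z.right : Matrix (Fin 2) (Fin 2) ℤ) 1 0) h
    simp [gen1, gen4, SemidirectProduct.right_inl, SemidirectProduct.right_inr,
      Matrix.SpecialLinearGroup.coe_one, Matrix.one_apply, Vmat_coe] at this
  · have := congrArg (fun z : Z2RtimesSL2 => (z.right : Matrix (Fin 2) (Fin 2) ℤ) 0 1) h
    simp [gen2, gen3, SemidirectProduct.right_inl, SemidirectProduct.right_inr,
      Matrix.SpecialLinearGroup.coe_one, Matrix.one_apply, Umat_coe] at this
  · have := congrArg (fun z : Z2RtimesSL2 => (z.right : Matrix (Fin 2) (Fin 2) ℤ) 1 0) h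
    simp [gen2, gen4, SemidirectProduct.right_inl, SemidirectProduct.right_inr,
      Matrix.SpecialLinearGroup.coe_one, Matrix.one_apply, Vmat_coe] at this
  · have := congrArg (fun z : Z2RtimesSL2 => (z.right : Matrix (Fin 2) (Fin 2) ℤ) 0 1) h
    simp [gen3, gen4, SemidirectProduct.right_inr, Umat_coe, Vmat_coe] at this

lemma upper_bound (q : ℤ) (hq : 2 ≤ q) :
    ∃ S : Finset Z2RtimesSL2, S.card = 4 ∧ Subgroup.closure (S : Set Z2RtimesSL2) = Hq q := by
  classical
  obtain ⟨h12, h13, h14, h23, h24, h34⟩ := gens_distinct q hq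
  refine ⟨{gen1 q, gen2 q, gen3, gen4}, ?_, ?_⟩
  · rw [Finset.card_insert_of_notMem (by simp [h12, h13, h14]),
      Finset.card_insert_of_notMem (by simp [h23, h24]),
      Finset.card_insert_of_notMem (by simp [h34]), Finset.card_singleton]
  · apply le_antisymm
    · refine (Subgroup.closure_le _).mpr ?_
      intro x hx
      simp only [Finset.coe_insert, Finset.coe_singleton, Set.mem_insert_iff,
        Set.mem_singleton_iff] at hx
      rcases hx with rfl | rfl | rfl | rfl
      exacts [gen1_mem q, gen2_mem q, gen3_mem q, gen4_mem q]
    · rw [Hq]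
      refine (Subgroup.closure_le _).mpr ?_
      rintro x (⟨v, hv, rfl⟩ | hx)
      · obtain ⟨a, ha⟩ := hv 0
        obtain ⟨b, hb⟩ := hv 1
        have hx : SemidirectProduct.inl v = (gen1 q) ^ a * (gen2 q) ^ b := by
          rw [gen1, gen2, ← map_zpow SemidirectProduct.inl, ← map_zpow SemidirectProduct.inl,
            ← map_mul]
          refine congrArg _ ?_
          refine Multiplicative.toAdd.injective ?_
          rw [toAdd_mul, toAdd_zpow, toAdd_zpow, toAdd_ofAdd, toAdd_ofAdd]
          funext i
          fin_cases i <;> simp [Pi.single_apply, smul_eq_mul]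
          · rw [ha]; ring
          · rw [hb]; ring
        rw [hx]
        have m1 : gen1 q ∈ ({gen1 q, gen2 q, gen3, gen4} : Finset Z2RtimesSL2) := by simp
        have m2 : gen2 q ∈ ({gen1 q, gen2 q, gen3, gen4} : Finset Z2RtimesSL2) := by simp
        exact mul_mem (Subgroup.zpow_mem _ (Subgroup.subset_closure m1) a)
          (Subgroup.zpow_mem _ (Subgroup.subset_closure m2) b)
      · rcases hx with rfl | rfl <;> exact Subgroup.subset_closure (by simp [gen3, gen4])

lemma lower_bound (q : ℤ) (hq : 2 ≤ q) (S : Finset Z2RtimesSL2)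
    (hS : Subgroup.closure (S : Set Z2RtimesSL2) = Hq q) : 4 ≤ S.card := by
  classical
  have hq0 : q ≠ 0 := by omega
  have hle : Hq q ≤ Kq q := Hq_le_Kq q
  have hSsub : (S : Set Z2RtimesSL2) ⊆ (Kq q : Set Z2RtimesSL2) := fun x hx =>
    hle (hS ▸ Subgroup.subset_closure hx)
  -- lift S into Kq
  let emb : {x // x ∈ S} ↪ ↥(Kq q) :=
    ⟨fun x => ⟨x.1, hSsub x.2⟩, fun a b h => by
      exact Subtype.ext (congrArg (fun z : ↥(Kq q) => (z : Z2RtimesSL2)) h :)⟩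
  let S' : Finset ↥(Kq q) := S.attach.map emb
  have hS'card : S'.card = S.card := by simp [S']
  have himg : (Kq q).subtype '' (S' : Set ↥(Kq q)) = (S : Set Z2RtimesSL2) := by
    ext y
    constructor
    · rintro ⟨z, hz, rfl⟩
      obtain ⟨w, _, rfl⟩ := Finset.mem_map.mp hz
      exact w.2
    · intro hy
      exact ⟨⟨y, hSsub hy⟩, Finset.mem_map.mpr ⟨⟨y, hy⟩, Finset.mem_attach _ _, rfl⟩, rfl⟩
  have hmapC : Subgroup.map (Kq q).subtype (Subgroup.closure (S' : Set ↥(Kq q))) = Hq q := by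
    rw [MonoidHom.map_closure, himg, hS]
  set C := Subgroup.closure (S' : Set ↥(Kq q)) with hC
  -- the image finset in (Fin 4 → ZMod 2)
  let T : Finset (Fin 4 → ZMod 2) := S'.image (fun x => Multiplicative.toAdd (F q hq0 x))
  set W := Submodule.span (ZMod 2) (T : Set (Fin 4 → ZMod 2)) with hW
  have key : ∀ x ∈ C, Multiplicative.toAdd (F q hq0 x) ∈ W := by
    intro x hx
    refine Subgroup.closure_induction
      (p := fun g _ => Multiplicative.toAdd (F q hq0 g) ∈ W) ?_ ?_ ?_ ?_ hx
    · intro g hg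
      exact Submodule.subset_span (by
        rw [Finset.coe_image]; exact ⟨g, hg, rfl⟩)
    · show Multiplicative.toAdd (F q hq0 1) ∈ W
      rw [map_one, toAdd_one]; exact W.zero_mem
    · intro a b _ _ ha hb
      show Multiplicative.toAdd (F q hq0 (a * b)) ∈ W
      rw [map_mul, toAdd_mul]; exact W.add_mem ha hb
    · intro a _ ha
      show Multiplicative.toAdd (F q hq0 a⁻¹) ∈ W
      rw [map_inv, toAdd_inv]; exact W.neg_mem ha
  -- each basis vector lies in W
  have getx : ∀ g : Z2RtimesSL2, g ∈ Hq q → ∃ x : ↥(Kq q), x ∈ C ∧ (x : Z2RtimesSL2) = g := by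
    intro g hg
    rw [← hmapC] at hg
    obtain ⟨x, hxC, hxg⟩ := hg
    exact ⟨x, hxC, hxg⟩
  obtain ⟨x1, hx1C, hx1⟩ := getx _ (gen1_mem q)
  obtain ⟨x2, hx2C, hx2⟩ := getx _ (gen2_mem q)
  obtain ⟨x3, hx3C, hx3⟩ := getx _ (gen3_mem q)
  obtain ⟨x4, hx4C, hx4⟩ := getx _ (gen4_mem q)
  have e1 : (![1,0,0,0] : Fin 4 → ZMod 2) ∈ W := F_gen1 q hq0 x1 hx1 ▸ key x1 hx1C
  have e2 : (![0,1,0,0] : Fin 4 → ZMod 2) ∈ W := F_gen2 q hq0 x2 hx2 ▸ key x2 hx2C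
  have e3 : (![0,0,1,0] : Fin 4 → ZMod 2) ∈ W := F_gen3 q hq0 x3 hx3 ▸ key x3 hx3C
  have e4 : (![0,0,0,1] : Fin 4 → ZMod 2) ∈ W := F_gen4 q hq0 x4 hx4 ▸ key x4 hx4C
  have hWtop : W = ⊤ := by
    refine top_unique ?_
    rw [← (Pi.basisFun (ZMod 2) (Fin 4)).span_eq]
    refine Submodule.span_le.mpr ?_
    rintro _ ⟨i, rfl⟩
    rw [Pi.basisFun_apply]
    fin_cases i
    · exact Set.mem_of_eq_of_mem (by decide) e1
    · exact Set.mem_of_eq_of_mem (by decide) e2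
    · exact Set.mem_of_eq_of_mem (by decide) e3
    · exact Set.mem_of_eq_of_mem (by decide) e4
  have hrank : Module.finrank (ZMod 2) W ≤ T.card := finrank_span_finset_le_card T
  rw [hWtop] at hrank
  have h4 : Module.finrank (ZMod 2) (Fin 4 → ZMod 2) = 4 := by
    simp [Module.finrank_pi]
  rw [finrank_top, h4] at hrank
  calc 4 ≤ T.card := hrank
    _ ≤ S'.card := Finset.card_image_le
    _ = S.card := hS'card

/-- For every integer `q ≥ 2`, the subgroup `H_q = ⟨qℤ², (0,U), (0,V)⟩` of
`ℤ² ⋊ SL(2,ℤ)` has rank exactly `4`: it has a generating set of `4` elements and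
no generating set of fewer than `4` elements. -/
theorem rank_Hq (q : ℤ) (hq : 2 ≤ q) :
    (∃ S : Finset Z2RtimesSL2, S.card = 4 ∧ Subgroup.closure (S : Set Z2RtimesSL2) = Hq q) ∧
      (∀ S : Finset Z2RtimesSL2, Subgroup.closure (S : Set Z2RtimesSL2) = Hq q →
        4 ≤ S.card) := by
  exact ⟨upper_bound q hq, fun S hS => lower_bound q hq S hS⟩
end
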